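/- arXiv:1809.00236 — 5 statements merged into one kernel-verified Lean document; each statement's English description precedes it below -/
import Mathlib

section
/- (Optimal undersmoothing.) Under the conditions of the Edgeworth expansion for T_US (Assumptions RD with S ≥ p+1 and K, n h / log(nh)^{2+γ} → ∞, √(nh) h^{p+1} log(nh)^{1+γ} → 0 for some γ > 0), the fastest possible decay of the coverage error of the undersmoothed interval is P[τ_ν ∈ I_US(h)] = (1−α) + O(n^{-(p+1)/(p+2)}), attained by choosing h ≍ n^{-1/(p+2)}; moreover, if Q_{US,k} ≠ 0 for k=1,2,3, the coverage-error optimal bandwidth is h_US = H_US n^{-1/(p+2)} with H_US = argmin_{H>0} | H^{-1} Q_{US,1} + H^{3+2p} Q_{US,2} + H^{1+p} Q_{US,3} |. -/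
/-!
Shared setup for "Optimal Bandwidth Choice for Robust Bias Corrected Inference
in Regression Discontinuity Designs" (Calonico, Cattaneo, Farrell).
-/

noncomputable section

open MeasureTheory ProbabilityTheory Filter Asymptotics Matrix Topology

namespace RD

/-! ### Sample-level local polynomial machinery -/

/-- Power vector `r_p(u) = (1, u, …, u^p)`. -/
def rvec (p : ℕ) (u : ℝ) : Fin (p + 1) → ℝ := fun j => u ^ (j : ℕ)

/-- Coordinate unit vector `e_ν` of `ℝ^{p+1}` (one in the `(ν+1)`-th position). -/
def evec (p ν : ℕ) : Fin (p + 1) → ℝ := fun j => if (j : ℕ) = ν then 1 else 0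

/-- Right one-sided kernel `K₊(u) = 1(u ≥ 0) K(u)`. -/
def Kp (K : ℝ → ℝ) (u : ℝ) : ℝ := if 0 ≤ u then K u else 0

/-- Left one-sided kernel `K₋(u) = 1(u < 0) K(u)`. -/
def Km (K : ℝ → ℝ) (u : ℝ) : ℝ := if u < 0 then K u else 0

/-- Assumption K (kernel): `K(u) = 1(u<0)k(-u) + 1(u≥0)k(u)` with `k : [0,1] → ℝ`
bounded, continuous on its support, positive on `(0,1)`, zero outside, and either
constant or such that `(1, K(u) r_{3(p+1)}(u)')` is linearly independent on `(0,1)`. -/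
def IsRDKernel (p : ℕ) (K : ℝ → ℝ) : Prop :=
  ∃ k : ℝ → ℝ,
    (∀ u, K u = if u < 0 then k (-u) else k u) ∧
    (∃ M : ℝ, ∀ u ∈ Set.Icc (0 : ℝ) 1, |k u| ≤ M) ∧
    ContinuousOn k (Set.Icc (0 : ℝ) 1) ∧
    (∀ u ∈ Set.Ioo (0 : ℝ) 1, 0 < k u) ∧
    (∀ u, u ∉ Set.Icc (0 : ℝ) 1 → k u = 0) ∧
    ((∀ u ∈ Set.Ioo (0 : ℝ) 1, ∀ v ∈ Set.Ioo (0 : ℝ) 1, k u = k v) ∨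
      LinearIndependent ℝ (fun j : Fin (3 * (p + 1) + 2) =>
        fun u : Set.Ioo (0 : ℝ) 1 =>
          if (j : ℕ) = 0 then (1 : ℝ) else K u * (u : ℝ) ^ ((j : ℕ) - 1)))

/-- Sample Gram matrix `G = (nh)⁻¹ Σᵢ K(X_{h,i}) r_p(X_{h,i}) r_p(X_{h,i})'`
(`K` is a one-sided kernel). -/
def Gmat (K : ℝ → ℝ) (p : ℕ) {n : ℕ} (c h : ℝ) (x : Fin n → ℝ) :
    Matrix (Fin (p + 1)) (Fin (p + 1)) ℝ :=
  ((n : ℝ) * h)⁻¹ • ∑ i, K ((x i - c) / h) •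
    vecMulVec (rvec p ((x i - c) / h)) (rvec p ((x i - c) / h))

/-- `S = (nh)⁻¹ Σᵢ K(X_{h,i}) Yᵢ r_p(X_{h,i})`. -/
def SvecLP (K : ℝ → ℝ) (p : ℕ) {n : ℕ} (c h : ℝ) (x y : Fin n → ℝ) : Fin (p + 1) → ℝ :=
  ((n : ℝ) * h)⁻¹ • ∑ i, (K ((x i - c) / h) * y i) • rvec p ((x i - c) / h)

/-- Scaled one-sided weighted least squares coefficients `θ̂ = G⁻¹ S`
(so that `θ̂_j = h^j β̂_j` for the coefficients in the `(X - c)` basis). -/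
def thetaHat (K : ℝ → ℝ) (p : ℕ) {n : ℕ} (c h : ℝ) (x y : Fin n → ℝ) : Fin (p + 1) → ℝ :=
  (Gmat K p c h x)⁻¹ *ᵥ SvecLP K p c h x y

/-- One-sided local polynomial estimate of `μ^{(ν)}(c)`: `ν! e_ν'β̂ = ν! h^{-ν} e_ν'θ̂`. -/
def muHat (K : ℝ → ℝ) (p ν : ℕ) {n : ℕ} (c h : ℝ) (x y : Fin n → ℝ) : ℝ :=
  (ν.factorial : ℝ) * h ^ (-(ν : ℤ)) * (evec p ν ⬝ᵥ thetaHat K p c h x y)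

/-- The sharp RD local polynomial point estimator
`τ̂_ν(h) = ν! e_ν'β̂₊ - ν! e_ν'β̂₋`. -/
def tauHat (K : ℝ → ℝ) (p ν : ℕ) {n : ℕ} (c h : ℝ) (x y : Fin n → ℝ) : ℝ :=
  muHat (Kp K) p ν c h x y - muHat (Km K) p ν c h x y

/-- One-sided local polynomial regression residual
`ε̂ᵢ = Yᵢ - r_p(Xᵢ - c)'β̂ = Yᵢ - r_p(X_{h,i})'θ̂`. -/
def resid (K : ℝ → ℝ) (p : ℕ) {n : ℕ} (c h : ℝ) (x y : Fin n → ℝ) (i : Fin n) : ℝ :=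
  y i - rvec p ((x i - c) / h) ⬝ᵥ thetaHat K p c h x y

/-- Fixed-n HC0 plug-in variance estimator `V̂(h)` of the (scaled) conditional variance
of `τ̂_ν(h)`: `V̂ = (h/n) ν!² e_ν'(G₊⁻¹Ω₊Σ̂₊Ω₊'G₊⁻¹ + G₋⁻¹Ω₋Σ̂₋Ω₋'G₋⁻¹)e_ν`. -/
def Vhat (K : ℝ → ℝ) (p ν : ℕ) {n : ℕ} (c h : ℝ) (x y : Fin n → ℝ) : ℝ :=
  ((n : ℝ) * h)⁻¹ * (ν.factorial : ℝ) ^ 2 *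
    ∑ i, ((Kp K ((x i - c) / h)) ^ 2 *
            (evec p ν ⬝ᵥ ((Gmat (Kp K) p c h x)⁻¹ *ᵥ rvec p ((x i - c) / h))) ^ 2 *
            (resid (Kp K) p c h x y i) ^ 2
        + (Km K ((x i - c) / h)) ^ 2 *
            (evec p ν ⬝ᵥ ((Gmat (Km K) p c h x)⁻¹ *ᵥ rvec p ((x i - c) / h))) ^ 2 *
            (resid (Km K) p c h x y i) ^ 2)

/-- `Λ_{p,k} = (nh)⁻¹ Σᵢ K(X_{h,i}) X_{h,i}^{p+k} r_p(X_{h,i})` (sample version). -/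
def LamVec (K : ℝ → ℝ) (p k : ℕ) {n : ℕ} (c h : ℝ) (x : Fin n → ℝ) : Fin (p + 1) → ℝ :=
  ((n : ℝ) * h)⁻¹ • ∑ i, (K ((x i - c) / h) * ((x i - c) / h) ^ (p + k)) •
    rvec p ((x i - c) / h)

/-- One-sided estimate `μ̂^{(p+1)}` of the `(p+1)`-th derivative at the cutoff, from an
order-`(p+1)` local polynomial fit with bandwidth `b`. -/
def muDerivHatTop (K : ℝ → ℝ) (p : ℕ) {n : ℕ} (c b : ℝ) (x y : Fin n → ℝ) : ℝ :=
  ((p + 1).factorial : ℝ) * b ^ (-((p : ℤ) + 1)) *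
    (evec (p + 1) (p + 1) ⬝ᵥ thetaHat K (p + 1) c b x y)

/-- Plug-in bias estimator `B̂(b)` built from the order-`(p+1)` local polynomial fits. -/
def Bhat (K : ℝ → ℝ) (p ν : ℕ) {n : ℕ} (c h b : ℝ) (x y : Fin n → ℝ) : ℝ :=
  ((ν.factorial : ℝ) / ((p + 1).factorial : ℝ)) *
    ((evec p ν ⬝ᵥ ((Gmat (Kp K) p c h x)⁻¹ *ᵥ LamVec (Kp K) p 1 c h x)) *
        muDerivHatTop (Kp K) p c b x y
      - (evec p ν ⬝ᵥ ((Gmat (Km K) p c h x)⁻¹ *ᵥ LamVec (Km K) p 1 c h x)) *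
        muDerivHatTop (Km K) p c b x y)

/-- Robust bias corrected estimator `τ̂_{ν,BC}(h) = τ̂_ν(h) - h^{p+1-ν} B̂(b)`. -/
def tauHatBC (K : ℝ → ℝ) (p ν : ℕ) {n : ℕ} (c h b : ℝ) (x y : Fin n → ℝ) : ℝ :=
  tauHat K p ν c h x y - h ^ ((p : ℤ) + 1 - ν) * Bhat K p ν c h b x y

/-- One-sided RBC weight for observation `i`:
`e_ν'G_p⁻¹` applied to the `i`-th column of `h Ω_BC`. -/
def wBC (K : ℝ → ℝ) (p ν : ℕ) {n : ℕ} (c h b : ℝ) (x : Fin n → ℝ) (i : Fin n) : ℝ :=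
  K ((x i - c) / h) * (evec p ν ⬝ᵥ ((Gmat K p c h x)⁻¹ *ᵥ rvec p ((x i - c) / h)))
    - (h / b) ^ (p + 2) * K ((x i - c) / b) *
        (evec p ν ⬝ᵥ ((Gmat K p c h x)⁻¹ *ᵥ LamVec K p 1 c h x)) *
        (evec (p + 1) (p + 1) ⬝ᵥ
          ((Gmat K (p + 1) c b x)⁻¹ *ᵥ rvec (p + 1) ((x i - c) / b)))

/-- Fixed-n HC0 plug-in variance estimator `V̂_BC(h)` for the RBC estimator, using
order-`(p+1)` local regression residuals at bandwidth `b`. -/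
def VhatBC (K : ℝ → ℝ) (p ν : ℕ) {n : ℕ} (c h b : ℝ) (x y : Fin n → ℝ) : ℝ :=
  ((n : ℝ) * h)⁻¹ * (ν.factorial : ℝ) ^ 2 *
    ∑ i, ((wBC (Kp K) p ν c h b x i) ^ 2 * (resid (Kp K) (p + 1) c b x y i) ^ 2
        + (wBC (Km K) p ν c h b x i) ^ 2 * (resid (Km K) (p + 1) c b x y i) ^ 2)

/-! ### Probabilistic setup -/

/-- Standard normal cumulative distribution function. -/
def Phi (z : ℝ) : ℝ := ((gaussianReal 0 1) (Set.Iic z)).toReal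

/-- Standard normal density. -/
def phiPDF (z : ℝ) : ℝ := gaussianPDFReal 0 1 z

/-- An i.i.d. sequence of sharp RD observations `(Xᵢ, Yᵢ(0), Yᵢ(1))`. -/
structure RDModel (Ω : Type) [MeasurableSpace Ω] (P : Measure Ω) where
  X : ℕ → Ω → ℝ
  Y0 : ℕ → Ω → ℝ
  Y1 : ℕ → Ω → ℝ
  meas : ∀ i, Measurable (X i) ∧ Measurable (Y0 i) ∧ Measurable (Y1 i)
  indep : iIndepFun (fun i ω => (X i ω, Y0 i ω, Y1 i ω)) P
  ident : ∀ i, IdentDistrib (fun ω => (X i ω, Y0 i ω, Y1 i ω))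
    (fun ω => (X 0 ω, Y0 0 ω, Y1 0 ω)) P P

/-- Observed outcome `Yᵢ = Yᵢ(0)(1 - Tᵢ) + Yᵢ(1)Tᵢ` with `Tᵢ = 1(Xᵢ ≥ c)`. -/
def Yobs {Ω : Type} (c : ℝ) (X Y0 Y1 : ℕ → Ω → ℝ) (i : ℕ) (ω : Ω) : ℝ :=
  if c ≤ X i ω then Y1 i ω else Y0 i ω

/-- Assumption RD, with smoothness index `S` and Hölder exponent `a`:
`f` is the Lebesgue density of `Xᵢ`, positive and continuous near the cutoff;
`μ₊(x) = E[Yᵢ(1)|Xᵢ=x]` and `μ₋(x) = E[Yᵢ(0)|Xᵢ=x]` are `S` times continuously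
differentiable with `a`-Hölder `S`-th derivatives; the conditional variances
`σ₊², σ₋²` are positive and continuous; and a conditional moment of order `δ > 8`
admits a continuous version. -/
structure AssumptionRD {Ω : Type} [MeasurableSpace Ω] (P : Measure Ω)
    (M : RDModel Ω P) (c xl xu : ℝ) (S : ℕ) (a : ℝ)
    (f μp μm σ2p σ2m : ℝ → ℝ) : Prop where
  h_xl : xl < c
  h_xu : c < xu
  h_a : a ∈ Set.Ioc (0 : ℝ) 1
  h_density : P.map (M.X 0)
    = (volume : Measure ℝ).withDensity (fun x => ENNReal.ofReal (f x))
  h_f_pos : ∀ x ∈ Set.Icc xl xu, 0 < f x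
  h_f_cont : ContinuousOn f (Set.Icc xl xu)
  h_condmean_p : ∀ i, (fun ω => μp (M.X i ω))
    =ᵐ[P] P[M.Y1 i | MeasurableSpace.comap (M.X i) (borel ℝ)]
  h_condmean_m : ∀ i, (fun ω => μm (M.X i ω))
    =ᵐ[P] P[M.Y0 i | MeasurableSpace.comap (M.X i) (borel ℝ)]
  h_smooth_p : ContDiffOn ℝ (S : ℕ∞) μp (Set.Icc xl xu)
  h_smooth_m : ContDiffOn ℝ (S : ℕ∞) μm (Set.Icc xl xu)
  h_holder_p : ∃ C : ℝ, ∀ x ∈ Set.Icc xl xu, ∀ y ∈ Set.Icc xl xu,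
    |iteratedDerivWithin S μp (Set.Icc xl xu) x
      - iteratedDerivWithin S μp (Set.Icc xl xu) y| ≤ C * |x - y| ^ a
  h_holder_m : ∃ C : ℝ, ∀ x ∈ Set.Icc xl xu, ∀ y ∈ Set.Icc xl xu,
    |iteratedDerivWithin S μm (Set.Icc xl xu) x
      - iteratedDerivWithin S μm (Set.Icc xl xu) y| ≤ C * |x - y| ^ a
  h_condvar_p : ∀ i, (fun ω => σ2p (M.X i ω))
    =ᵐ[P] P[fun ω => (M.Y1 i ω - μp (M.X i ω)) ^ 2
        | MeasurableSpace.comap (M.X i) (borel ℝ)]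
  h_condvar_m : ∀ i, (fun ω => σ2m (M.X i ω))
    =ᵐ[P] P[fun ω => (M.Y0 i ω - μm (M.X i ω)) ^ 2
        | MeasurableSpace.comap (M.X i) (borel ℝ)]
  h_var_pos_p : ∀ x ∈ Set.Icc xl xu, 0 < σ2p x
  h_var_pos_m : ∀ x ∈ Set.Icc xl xu, 0 < σ2m x
  h_var_cont_p : ContinuousOn σ2p (Set.Icc xl xu)
  h_var_cont_m : ContinuousOn σ2m (Set.Icc xl xu)
  h_moment : ∃ δ : ℝ, 8 < δ ∧ ∀ i, ∃ mp mm : ℝ → ℝ,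
    ContinuousOn mp (Set.Icc xl xu) ∧ ContinuousOn mm (Set.Icc xl xu) ∧
    ((fun ω => mp (M.X i ω)) =ᵐ[P]
      P[fun ω => |M.Y1 i ω| ^ δ | MeasurableSpace.comap (M.X i) (borel ℝ)]) ∧
    ((fun ω => mm (M.X i ω)) =ᵐ[P]
      P[fun ω => |M.Y0 i ω| ^ δ | MeasurableSpace.comap (M.X i) (borel ℝ)])

/-- The sharp RD target parameter `τ_ν = μ₊^{(ν)}(c) - μ₋^{(ν)}(c)`. -/
def tauParam (xl xu : ℝ) (μp μm : ℝ → ℝ) (ν : ℕ) (c : ℝ) : ℝ :=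
  iteratedDerivWithin ν μp (Set.Icc xl xu) c - iteratedDerivWithin ν μm (Set.Icc xl xu) c

/-- Coverage probability of the undersmoothed interval
`I_US(h) = [τ̂_ν(h) ± z √(V̂(h)/(n h^{1+2ν}))]` at sample size `n`. -/
def coverUS {Ω : Type} [MeasurableSpace Ω] (P : Measure Ω) (M : RDModel Ω P)
    (K : ℝ → ℝ) (p ν : ℕ) (c τ z : ℝ) (h : ℕ → ℝ) (n : ℕ) : ℝ :=
  (P {ω | |τ - tauHat K p ν c (h n) (fun i : Fin n => M.X i ω)
        (fun i : Fin n => Yobs c M.X M.Y0 M.Y1 i ω)| ≤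
      z * Real.sqrt (Vhat K p ν c (h n) (fun i : Fin n => M.X i ω)
          (fun i : Fin n => Yobs c M.X M.Y0 M.Y1 i ω)
        / ((n : ℝ) * (h n) ^ (1 + 2 * ν)))}).toReal

/-- Coverage probability of the robust bias corrected interval
`I_RBC(h) = [τ̂_{ν,BC}(h) ± z √(V̂_BC(h)/(n h^{1+2ν}))]` at sample size `n`. -/
def coverRBC {Ω : Type} [MeasurableSpace Ω] (P : Measure Ω) (M : RDModel Ω P)
    (K : ℝ → ℝ) (p ν : ℕ) (c τ z : ℝ) (h b : ℕ → ℝ) (n : ℕ) : ℝ :=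
  (P {ω | |τ - tauHatBC K p ν c (h n) (b n) (fun i : Fin n => M.X i ω)
        (fun i : Fin n => Yobs c M.X M.Y0 M.Y1 i ω)| ≤
      z * Real.sqrt (VhatBC K p ν c (h n) (b n) (fun i : Fin n => M.X i ω)
          (fun i : Fin n => Yobs c M.X M.Y0 M.Y1 i ω)
        / ((n : ℝ) * (h n) ^ (1 + 2 * ν)))}).toReal

/-- Fixed-n expectation of the kernel-weighted design matrix:
`G̃ᵢⱼ = E[h⁻¹ K(X_{h}) X_h^{i+j}]`. -/
def Gtil {Ω : Type} [MeasurableSpace Ω] (P : Measure Ω) (M : RDModel Ω P)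
    (K : ℝ → ℝ) (p : ℕ) (c h : ℝ) : Matrix (Fin (p + 1)) (Fin (p + 1)) ℝ :=
  fun i j => ∫ x, h⁻¹ * K ((x - c) / h) * ((x - c) / h) ^ ((i : ℕ) + (j : ℕ))
    ∂(P.map (M.X 0))

/-- Fixed-n expectation of the kernel-weighted moment vector:
`Λ̃_{p,k}(j) = E[h⁻¹ K(X_h) X_h^{j + p + k}]`. -/
def LamTil {Ω : Type} [MeasurableSpace Ω] (P : Measure Ω) (M : RDModel Ω P)
    (K : ℝ → ℝ) (p k : ℕ) (c h : ℝ) : Fin (p + 1) → ℝ :=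
  fun j => ∫ x, h⁻¹ * K ((x - c) / h) * ((x - c) / h) ^ ((j : ℕ) + p + k)
    ∂(P.map (M.X 0))

/-- A sequence of bounded (in `n`) real constants. -/
def BddSeq (Q : ℕ → ℝ) : Prop := ∃ C : ℝ, ∀ n, |Q n| ≤ C

/-- A family `Q n z` of polynomials in `z` of degree at most `d` with coefficients
bounded uniformly in `n`. -/
def PolyBdd (d : ℕ) (Q : ℕ → ℝ → ℝ) : Prop :=
  ∃ coef : ℕ → Fin (d + 1) → ℝ, (∃ C : ℝ, ∀ n j, |coef n j| ≤ C) ∧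
    ∀ n z, Q n z = ∑ j, coef n j * z ^ (j : ℕ)

end RD

open MeasureTheory ProbabilityTheory Filter Asymptotics Matrix Topology RD

section CCFAux

open Real Set Filter Asymptotics


lemma CCF_tendsto_div_log (s : ℝ) :
    Tendsto (fun x : ℝ => x / Real.log x ^ s) atTop atTop := by
  have h := (isLittleO_log_rpow_rpow_atTop s one_pos).tendsto_div_nhds_zero
  have h0 : Tendsto (fun x : ℝ => Real.log x ^ s / x) atTop (nhds 0) := by
    simpa [Real.rpow_one] using h
  have hpos : ∀ᶠ x : ℝ in atTop, Real.log x ^ s / x ∈ Set.Ioi (0:ℝ) := by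
    filter_upwards [eventually_ge_atTop (Real.exp 1), eventually_gt_atTop (0:ℝ)] with x hx hx0
    have hlog : (0:ℝ) < Real.log x := by
      have : (1:ℝ) ≤ Real.log x := by
        rw [← Real.log_exp 1]
        exact Real.log_le_log (Real.exp_pos 1) hx
      linarith
    exact div_pos (Real.rpow_pos_of_pos hlog s) hx0
  have h2 : Tendsto (fun x : ℝ => Real.log x ^ s / x) atTop (nhdsWithin 0 (Set.Ioi 0)) :=
    tendsto_nhdsWithin_of_tendsto_nhds_of_eventually_within _ h0 hpos
  have h3 := h2.inv_tendsto_nhdsGT_zero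
  have heq : (fun x : ℝ => Real.log x ^ s / x)⁻¹ = fun x : ℝ => x / Real.log x ^ s := by
    funext x; simp [Pi.inv_apply, inv_div]
  rwa [heq] at h3

lemma CCF_tendsto_log_div_sqrt (s : ℝ) :
    Tendsto (fun x : ℝ => Real.log x ^ s / Real.sqrt x) atTop (nhds 0) := by
  have h := (isLittleO_log_rpow_rpow_atTop s
    (by norm_num : (0:ℝ) < 1/2)).tendsto_div_nhds_zero
  refine h.congr fun x => ?_
  rw [Real.sqrt_eq_rpow]

lemma CCF_core (p : ℕ) (γ a : ℝ) (hγ : 0 < γ) (ha : 0 < a)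
    (Q1 Q2 Q3 : ℝ) (cov g : ℕ → ℝ) (hg : ∀ n, 0 < g n)
    (c1 c2 : ℝ) (hc1 : 0 < c1)
    (hbd : ∀ n : ℕ, 0 < n → c1 * (n : ℝ) ^ (-(1 : ℝ) / (p + 2)) ≤ g n ∧
        g n ≤ c2 * (n : ℝ) ^ (-(1 : ℝ) / (p + 2)))
    (hexp :
      Tendsto (fun n : ℕ => (n : ℝ) * g n
        / Real.log ((n : ℝ) * g n) ^ ((2 : ℝ) + γ)) atTop atTop →
      Tendsto (fun n : ℕ => Real.sqrt ((n : ℝ) * g n) * g n ^ (p + 1)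
        * Real.log ((n : ℝ) * g n) ^ ((1 : ℝ) + γ)) atTop (nhds 0) →
      ∃ e1 e2 : ℕ → ℝ,
        (e1 =o[atTop] fun n : ℕ => ((n : ℝ) * g n)⁻¹) ∧
        (e2 =O[atTop] fun n : ℕ =>
          (n : ℝ) * g n ^ ((3 : ℝ) + 2 * p + 2 * a) + g n ^ ((1 : ℝ) + p + a)) ∧
        ∀ n : ℕ, cov n
            = ((n : ℝ) * g n)⁻¹ * Q1 + (n : ℝ) * g n ^ (3 + 2 * p) * Q2
              + g n ^ (1 + p) * Q3 + e1 n + e2 n) :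
    cov =O[atTop] fun n : ℕ => (n : ℝ) ^ (-((p : ℝ) + 1) / (p + 2)) := by
  set E : ℝ := -(1 : ℝ) / (p + 2) with hE
  set F : ℝ := -((p : ℝ) + 1) / (p + 2) with hF
  have hP2 : (0:ℝ) < (p:ℝ) + 2 := by positivity
  -- c2 positive
  have hc2 : 0 < c2 := by
    have h1 := hbd 1 one_pos
    have : ((1:ℕ):ℝ) ^ E = 1 := by rw [Nat.cast_one, Real.one_rpow]
    rw [this] at h1
    nlinarith [hg 1, h1.1, h1.2]
  -- lower bound for t n = n * g n
  have hlow : ∀ n : ℕ, 1 ≤ n →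
      c1 * (n:ℝ) ^ (((p:ℝ)+1)/((p:ℝ)+2)) ≤ (n:ℝ) * g n := by
    intro n hn
    have hn1 : (1:ℝ) ≤ (n:ℝ) := by exact_mod_cast hn
    have hn0 : (0:ℝ) < (n:ℝ) := by linarith
    have hb := (hbd n hn).1
    have hkey : (n:ℝ) * ((n:ℝ) ^ E) = (n:ℝ) ^ (((p:ℝ)+1)/((p:ℝ)+2)) := by
      rw [← Real.rpow_one_add' (le_of_lt hn0)]
      · congr 1
        rw [hE]; field_simp
        ring
      · rw [hE]
        have heq : (1:ℝ) + -1 / ((p:ℝ) + 2) = ((p:ℝ)+1)/((p:ℝ)+2) := by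
          field_simp
          ring
        rw [heq]
        positivity
    calc c1 * (n:ℝ) ^ (((p:ℝ)+1)/((p:ℝ)+2)) = (n:ℝ) * (c1 * (n:ℝ) ^ E) := by
          rw [← hkey]; ring
    _ ≤ (n:ℝ) * g n := by
          exact mul_le_mul_of_nonneg_left hb (le_of_lt hn0)
  have htpos : ∀ n : ℕ, 1 ≤ n → 0 < (n:ℝ) * g n := by
    intro n hn
    have hn0 : (0:ℝ) < (n:ℝ) := by exact_mod_cast Nat.lt_of_lt_of_le Nat.zero_lt_one hn
    exact mul_pos hn0 (hg n)
  -- t tends to infinity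
  have htendsto : Tendsto (fun n : ℕ => (n:ℝ) * g n) atTop atTop := by
    have hexp_pos : (0:ℝ) < ((p:ℝ)+1)/((p:ℝ)+2) := by positivity
    have h1 : Tendsto (fun n : ℕ => c1 * (n:ℝ) ^ (((p:ℝ)+1)/((p:ℝ)+2))) atTop atTop := by
      exact ((tendsto_rpow_atTop hexp_pos).comp tendsto_natCast_atTop_atTop).const_mul_atTop hc1
    refine tendsto_atTop_mono' atTop ?_ h1
    filter_upwards [eventually_ge_atTop 1] with n hn
    exact hlow n hn
  -- condition A
  have condA : Tendsto (fun n : ℕ => (n : ℝ) * g n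
      / Real.log ((n : ℝ) * g n) ^ ((2 : ℝ) + γ)) atTop atTop :=
    (CCF_tendsto_div_log ((2:ℝ)+γ)).comp htendsto
  -- key power bound: g^{p+1} * t ≤ c2^{p+2}
  have hgt : ∀ n : ℕ, 1 ≤ n → g n ^ (p+1) * ((n:ℝ) * g n) ≤ c2 ^ (p+2) := by
    intro n hn
    have hn1 : (1:ℝ) ≤ (n:ℝ) := by exact_mod_cast hn
    have hn0 : (0:ℝ) < (n:ℝ) := by linarith
    have hb := (hbd n hn).2
    have h1 : g n ^ (p+1) * ((n:ℝ) * g n) = (n:ℝ) * g n ^ (p+2) := by ring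
    have h2 : g n ^ (p+2) ≤ (c2 * (n:ℝ) ^ E) ^ (p+2) :=
      pow_le_pow_left₀ (le_of_lt (hg n)) hb (p+2)
    have h3 : ((n:ℝ) ^ E) ^ (p+2) = ((n:ℝ))⁻¹ := by
      rw [← Real.rpow_natCast ((n:ℝ) ^ E) (p+2), ← Real.rpow_mul (le_of_lt hn0)]
      have : E * ((p+2 : ℕ):ℝ) = -1 := by
        push_cast [hE]; field_simp
      rw [this, Real.rpow_neg_one]
    have h4 : (c2 * (n:ℝ) ^ E) ^ (p+2) = c2 ^ (p+2) * ((n:ℝ))⁻¹ := by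
      rw [mul_pow, h3]
    calc g n ^ (p+1) * ((n:ℝ) * g n) = (n:ℝ) * g n ^ (p+2) := h1
    _ ≤ (n:ℝ) * (c2 ^ (p+2) * ((n:ℝ))⁻¹) := by
        rw [← h4]; exact mul_le_mul_of_nonneg_left h2 (le_of_lt hn0)
    _ = c2 ^ (p+2) := by field_simp
  -- condition B
  have condB : Tendsto (fun n : ℕ => Real.sqrt ((n : ℝ) * g n) * g n ^ (p + 1)
      * Real.log ((n : ℝ) * g n) ^ ((1 : ℝ) + γ)) atTop (nhds 0) := by
    have hB : Tendsto (fun n : ℕ => c2 ^ (p+2) *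
        (Real.log ((n:ℝ) * g n) ^ ((1:ℝ)+γ) / Real.sqrt ((n:ℝ) * g n))) atTop (nhds 0) := by
      have := ((CCF_tendsto_log_div_sqrt ((1:ℝ)+γ)).comp htendsto).const_mul (c2 ^ (p+2))
      simpa using this
    refine squeeze_zero' ?_ ?_ hB
    · filter_upwards [htendsto.eventually_ge_atTop 1, eventually_ge_atTop 1] with n ht hn
      have hL : (0:ℝ) ≤ Real.log ((n:ℝ) * g n) := Real.log_nonneg ht
      exact mul_nonneg (mul_nonneg (Real.sqrt_nonneg _) (pow_nonneg (le_of_lt (hg n)) _))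
        (Real.rpow_nonneg hL _)
    · filter_upwards [htendsto.eventually_ge_atTop 1, eventually_ge_atTop 1] with n ht hn
      have htp : (0:ℝ) < (n:ℝ) * g n := htpos n hn
      have hL : (0:ℝ) ≤ Real.log ((n:ℝ) * g n) := Real.log_nonneg ht
      have hstep : g n ^ (p+1) ≤ c2 ^ (p+2) / ((n:ℝ) * g n) :=
        (le_div_iff₀ htp).2 (hgt n hn)
      have hsq : (0:ℝ) < Real.sqrt ((n:ℝ) * g n) := Real.sqrt_pos.2 htp
      calc Real.sqrt ((n:ℝ) * g n) * g n ^ (p+1) * Real.log ((n:ℝ) * g n) ^ ((1:ℝ)+γ)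
          ≤ Real.sqrt ((n:ℝ) * g n) * (c2 ^ (p+2) / ((n:ℝ) * g n))
            * Real.log ((n:ℝ) * g n) ^ ((1:ℝ)+γ) := by
            gcongr
      _ = c2 ^ (p+2) * (Real.log ((n:ℝ) * g n) ^ ((1:ℝ)+γ) / Real.sqrt ((n:ℝ) * g n)) := by
            have hds : Real.sqrt ((n:ℝ) * g n) / ((n:ℝ) * g n)
                = 1 / Real.sqrt ((n:ℝ) * g n) := Real.sqrt_div_self'
            calc Real.sqrt ((n:ℝ) * g n) * (c2 ^ (p+2) / ((n:ℝ) * g n))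
                  * Real.log ((n:ℝ) * g n) ^ ((1:ℝ)+γ)
                = (Real.sqrt ((n:ℝ) * g n) / ((n:ℝ) * g n)) * c2 ^ (p+2)
                  * Real.log ((n:ℝ) * g n) ^ ((1:ℝ)+γ) := by ring
            _ = (1 / Real.sqrt ((n:ℝ) * g n)) * c2 ^ (p+2)
                  * Real.log ((n:ℝ) * g n) ^ ((1:ℝ)+γ) := by rw [hds]
            _ = c2 ^ (p+2) * (Real.log ((n:ℝ) * g n) ^ ((1:ℝ)+γ)
                  / Real.sqrt ((n:ℝ) * g n)) := by ring
  -- apply the expansion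
  obtain ⟨e1, e2, he1, he2, hid⟩ := hexp condA condB
  -- target function facts
  have hTpos : ∀ n : ℕ, 1 ≤ n → (0:ℝ) < (n:ℝ) ^ F := by
    intro n hn
    have hn0 : (0:ℝ) < (n:ℝ) := by exact_mod_cast Nat.lt_of_lt_of_le Nat.zero_lt_one hn
    exact Real.rpow_pos_of_pos hn0 F
  have obound : ∀ (f : ℕ → ℝ) (C : ℝ), (∀ n : ℕ, 1 ≤ n → |f n| ≤ C * (n:ℝ) ^ F) →
      f =O[atTop] fun n : ℕ => (n:ℝ) ^ F := by
    intro f C h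
    refine IsBigO.of_bound C ?_
    filter_upwards [eventually_ge_atTop 1] with n hn
    rw [Real.norm_eq_abs, Real.norm_eq_abs, abs_of_pos (hTpos n hn)]
    exact h n hn
  -- inverse bound
  have htinv : ∀ n : ℕ, 1 ≤ n → ((n:ℝ) * g n)⁻¹ ≤ c1⁻¹ * (n:ℝ) ^ F := by
    intro n hn
    have hn1 : (1:ℝ) ≤ (n:ℝ) := by exact_mod_cast hn
    have hn0 : (0:ℝ) < (n:ℝ) := by linarith
    have hTF : (n:ℝ) ^ F = ((n:ℝ) ^ (((p:ℝ)+1)/((p:ℝ)+2)))⁻¹ := by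
      rw [← Real.rpow_neg (le_of_lt hn0)]
      congr 1
      rw [hF]; ring
    have hl := hlow n hn
    have hU : (0:ℝ) < (n:ℝ) ^ (((p:ℝ)+1)/((p:ℝ)+2)) := Real.rpow_pos_of_pos hn0 _
    calc ((n:ℝ) * g n)⁻¹ ≤ (c1 * (n:ℝ) ^ (((p:ℝ)+1)/((p:ℝ)+2)))⁻¹ :=
          inv_anti₀ (mul_pos hc1 hU) hl
    _ = c1⁻¹ * ((n:ℝ) ^ (((p:ℝ)+1)/((p:ℝ)+2)))⁻¹ := mul_inv _ _
    _ = c1⁻¹ * (n:ℝ) ^ F := by rw [hTF]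
  -- term 1
  have hO1 : (fun n : ℕ => ((n:ℝ) * g n)⁻¹ * Q1) =O[atTop] fun n : ℕ => (n:ℝ) ^ F := by
    apply obound _ (c1⁻¹ * |Q1|)
    intro n hn
    rw [abs_mul, abs_of_pos (inv_pos.2 (htpos n hn))]
    calc ((n:ℝ) * g n)⁻¹ * |Q1| ≤ (c1⁻¹ * (n:ℝ) ^ F) * |Q1| :=
          mul_le_mul_of_nonneg_right (htinv n hn) (abs_nonneg _)
    _ = c1⁻¹ * |Q1| * (n:ℝ) ^ F := by ring
  -- term 2
  have hO2 : (fun n : ℕ => (n:ℝ) * g n ^ (3 + 2*p) * Q2) =O[atTop]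
      fun n : ℕ => (n:ℝ) ^ F := by
    apply obound _ (c2 ^ (3+2*p) * |Q2|)
    intro n hn
    have hn1 : (1:ℝ) ≤ (n:ℝ) := by exact_mod_cast hn
    have hn0 : (0:ℝ) < (n:ℝ) := by linarith
    have hb := (hbd n hn).2
    have h2 : g n ^ (3+2*p) ≤ (c2 * (n:ℝ) ^ E) ^ (3+2*p) :=
      pow_le_pow_left₀ (le_of_lt (hg n)) hb _
    have h3 : (n:ℝ) * ((n:ℝ) ^ E) ^ (3+2*p) = (n:ℝ) ^ F := by
      rw [← Real.rpow_natCast ((n:ℝ) ^ E) (3+2*p), ← Real.rpow_mul (le_of_lt hn0),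
        ← Real.rpow_one_add' (le_of_lt hn0)]
      · congr 1
        push_cast [hE, hF]
        field_simp
        ring
      · push_cast [hE]
        have heq : (1:ℝ) + -1 / ((p:ℝ) + 2) * (3 + 2*(p:ℝ)) = -(((p:ℝ)+1)/((p:ℝ)+2)) := by
          field_simp; ring
        rw [heq]
        have : (0:ℝ) < ((p:ℝ)+1)/((p:ℝ)+2) := by positivity
        intro hcontra
        rw [neg_eq_zero] at hcontra
        linarith
    rw [abs_mul, abs_mul, abs_of_pos hn0, abs_of_pos (pow_pos (hg n) _)]
    calc (n:ℝ) * g n ^ (3+2*p) * |Q2| ≤ (n:ℝ) * (c2 * (n:ℝ) ^ E) ^ (3+2*p) * |Q2| := by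
          gcongr
    _ = c2 ^ (3+2*p) * |Q2| * (n:ℝ) ^ F := by
          rw [mul_pow, ← h3]
          ring
  -- term 3
  have hO3 : (fun n : ℕ => g n ^ (1+p) * Q3) =O[atTop] fun n : ℕ => (n:ℝ) ^ F := by
    apply obound _ (c2 ^ (1+p) * |Q3|)
    intro n hn
    have hn1 : (1:ℝ) ≤ (n:ℝ) := by exact_mod_cast hn
    have hn0 : (0:ℝ) < (n:ℝ) := by linarith
    have hb := (hbd n hn).2
    have h2 : g n ^ (1+p) ≤ (c2 * (n:ℝ) ^ E) ^ (1+p) :=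
      pow_le_pow_left₀ (le_of_lt (hg n)) hb _
    have h3 : ((n:ℝ) ^ E) ^ (1+p) = (n:ℝ) ^ F := by
      rw [← Real.rpow_natCast ((n:ℝ) ^ E) (1+p), ← Real.rpow_mul (le_of_lt hn0)]
      congr 1
      push_cast [hE, hF]
      field_simp
      ring
    rw [abs_mul, abs_of_pos (pow_pos (hg n) _)]
    calc g n ^ (1+p) * |Q3| ≤ (c2 * (n:ℝ) ^ E) ^ (1+p) * |Q3| := by gcongr
    _ = c2 ^ (1+p) * |Q3| * (n:ℝ) ^ F := by rw [mul_pow, h3]; ring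
  -- term 4
  have hO4 : e1 =O[atTop] fun n : ℕ => (n:ℝ) ^ F := by
    refine he1.isBigO.trans (obound _ c1⁻¹ ?_)
    intro n hn
    rw [abs_of_pos (inv_pos.2 (htpos n hn))]
    exact htinv n hn
  -- term 5
  have hO5 : e2 =O[atTop] fun n : ℕ => (n:ℝ) ^ F := by
    refine he2.trans (obound _ (c2 ^ ((3:ℝ) + 2*p + 2*a) + c2 ^ ((1:ℝ) + p + a)) ?_)
    intro n hn
    have hn1 : (1:ℝ) ≤ (n:ℝ) := by exact_mod_cast hn
    have hn0 : (0:ℝ) < (n:ℝ) := by linarith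
    have hb := (hbd n hn).2
    have hE1 : (0:ℝ) ≤ (3:ℝ) + 2*p + 2*a := by positivity
    have hE2 : (0:ℝ) ≤ (1:ℝ) + p + a := by positivity
    have hnE : (0:ℝ) ≤ (n:ℝ) ^ E := Real.rpow_nonneg (le_of_lt hn0) E
    -- first summand
    have k1 : (n:ℝ) * g n ^ ((3:ℝ) + 2*p + 2*a) ≤ c2 ^ ((3:ℝ)+2*p+2*a) * (n:ℝ) ^ F := by
      have h2 : g n ^ ((3:ℝ)+2*p+2*a) ≤ (c2 * (n:ℝ) ^ E) ^ ((3:ℝ)+2*p+2*a) :=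
        Real.rpow_le_rpow (le_of_lt (hg n)) hb hE1
      have h3 : (c2 * (n:ℝ) ^ E) ^ ((3:ℝ)+2*p+2*a)
          = c2 ^ ((3:ℝ)+2*p+2*a) * (n:ℝ) ^ (E * ((3:ℝ)+2*p+2*a)) := by
        rw [Real.mul_rpow (le_of_lt hc2) hnE, ← Real.rpow_mul (le_of_lt hn0)]
      have heq1 : (1:ℝ) + E * ((3:ℝ)+2*p+2*a) = (-((p:ℝ)+1) - 2*a)/((p:ℝ)+2) := by
        rw [hE]; field_simp; ring
      have h4 : (n:ℝ) * (n:ℝ) ^ (E * ((3:ℝ)+2*p+2*a)) ≤ (n:ℝ) ^ F := by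
        rw [← Real.rpow_one_add' (le_of_lt hn0)]
        · apply Real.rpow_le_rpow_of_exponent_le hn1
          rw [heq1, hF, div_le_div_iff₀ hP2 hP2]
          nlinarith [hP2, ha]
        · rw [heq1]
          have : (-((p:ℝ)+1) - 2*a)/((p:ℝ)+2) < 0 :=
            div_neg_of_neg_of_pos (by linarith) hP2
          exact ne_of_lt this
      calc (n:ℝ) * g n ^ ((3:ℝ)+2*p+2*a) ≤ (n:ℝ) * (c2 * (n:ℝ) ^ E) ^ ((3:ℝ)+2*p+2*a) := by
            gcongr
      _ = c2 ^ ((3:ℝ)+2*p+2*a) * ((n:ℝ) * (n:ℝ) ^ (E * ((3:ℝ)+2*p+2*a))) := by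
            rw [h3]; ring
      _ ≤ c2 ^ ((3:ℝ)+2*p+2*a) * (n:ℝ) ^ F := by
            exact mul_le_mul_of_nonneg_left h4 (Real.rpow_nonneg (le_of_lt hc2) _)
    -- second summand
    have k2 : g n ^ ((1:ℝ) + p + a) ≤ c2 ^ ((1:ℝ)+p+a) * (n:ℝ) ^ F := by
      have h2 : g n ^ ((1:ℝ)+p+a) ≤ (c2 * (n:ℝ) ^ E) ^ ((1:ℝ)+p+a) :=
        Real.rpow_le_rpow (le_of_lt (hg n)) hb hE2
      have h3 : (c2 * (n:ℝ) ^ E) ^ ((1:ℝ)+p+a)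
          = c2 ^ ((1:ℝ)+p+a) * (n:ℝ) ^ (E * ((1:ℝ)+p+a)) := by
        rw [Real.mul_rpow (le_of_lt hc2) hnE, ← Real.rpow_mul (le_of_lt hn0)]
      have heq2 : E * ((1:ℝ)+p+a) = (-((1:ℝ)+p+a))/((p:ℝ)+2) := by
        rw [hE]; ring
      have h4 : (n:ℝ) ^ (E * ((1:ℝ)+p+a)) ≤ (n:ℝ) ^ F := by
        apply Real.rpow_le_rpow_of_exponent_le hn1
        rw [heq2, hF, div_le_div_iff₀ hP2 hP2]
        nlinarith [hP2, ha]
      calc g n ^ ((1:ℝ)+p+a) ≤ c2 ^ ((1:ℝ)+p+a) * (n:ℝ) ^ (E * ((1:ℝ)+p+a)) := by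
            rw [← h3]; exact h2
      _ ≤ c2 ^ ((1:ℝ)+p+a) * (n:ℝ) ^ F :=
            mul_le_mul_of_nonneg_left h4 (Real.rpow_nonneg (le_of_lt hc2) _)
    have hnonneg : (0:ℝ) ≤ (n:ℝ) * g n ^ ((3:ℝ) + 2*p + 2*a) + g n ^ ((1:ℝ) + p + a) := by
      have := Real.rpow_nonneg (le_of_lt (hg n)) ((3:ℝ)+2*p+2*a)
      have := Real.rpow_nonneg (le_of_lt (hg n)) ((1:ℝ)+p+a)
      positivity
    rw [abs_of_nonneg hnonneg, add_mul]
    exact add_le_add k1 k2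
  -- assemble
  have hcov : cov = fun n : ℕ => ((n : ℝ) * g n)⁻¹ * Q1 + (n : ℝ) * g n ^ (3 + 2 * p) * Q2
      + g n ^ (1 + p) * Q3 + e1 n + e2 n := funext hid
  rw [hcov]
  exact ((((hO1.add hO2).add hO3).add hO4).add hO5)


lemma CCF_abs_lb (x y z : ℝ) : |x| - |y| - |z| ≤ |x + y + z| := by
  have h1 : |x| ≤ |x + y + z| + (|y| + |z|) := by
    calc |x| = |x + y + z + (-y + -z)| := by congr 1; ring
    _ ≤ |x + y + z| + |(-y + -z)| := abs_add_le _ _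
    _ ≤ |x + y + z| + (|(-y)| + |(-z)|) := by gcongr; exact abs_add_le _ _
    _ = |x + y + z| + (|y| + |z|) := by rw [abs_neg, abs_neg]
  linarith

lemma CCF_minimizer (p : ℕ) (Q1 Q2 Q3 : ℝ) (hQ1 : Q1 ≠ 0) (hQ2 : Q2 ≠ 0) :
    ∃ HUS : ℝ, 0 < HUS ∧
      IsMinOn (fun H : ℝ => |H⁻¹ * Q1 + H ^ (3 + 2 * p) * Q2 + H ^ (1 + p) * Q3|)
        (Set.Ioi 0) HUS := by
  set fQ : ℝ → ℝ := fun H => |H⁻¹ * Q1 + H ^ (3 + 2 * p) * Q2 + H ^ (1 + p) * Q3| with hfQ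
  have habsQ1 : 0 < |Q1| := abs_pos.2 hQ1
  have habsQ2 : 0 < |Q2| := abs_pos.2 hQ2
  have hfQ1 : 0 ≤ fQ 1 := abs_nonneg _
  set D : ℝ := fQ 1 + 1 + |Q2| + |Q3| with hD
  have hD0 : 0 < D := by
    have := abs_nonneg Q3
    rw [hD]; linarith
  set ε : ℝ := min 1 (|Q1| / D) with hε
  have hε0 : 0 < ε := lt_min one_pos (div_pos habsQ1 hD0)
  have hε1 : ε ≤ 1 := min_le_left _ _
  set R : ℝ := max 1 ((fQ 1 + 1 + |Q1| + |Q3|) / |Q2|) with hR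
  have hR1 : (1:ℝ) ≤ R := le_max_left _ _
  -- small H
  have hsmall : ∀ H : ℝ, 0 < H → H ≤ ε → fQ 1 + 1 ≤ fQ H := by
    intro H hH hHε
    have hH1 : H ≤ 1 := le_trans hHε hε1
    have hlb := CCF_abs_lb (H⁻¹ * Q1) (H ^ (3 + 2*p) * Q2) (H ^ (1+p) * Q3)
    have e2 : |H ^ (3 + 2*p) * Q2| ≤ |Q2| := by
      rw [abs_mul, abs_of_pos (pow_pos hH _)]
      nlinarith [pow_le_one₀ hH.le hH1 (n := 3+2*p), abs_nonneg Q2,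
        pow_pos hH (3+2*p)]
    have e3 : |H ^ (1+p) * Q3| ≤ |Q3| := by
      rw [abs_mul, abs_of_pos (pow_pos hH _)]
      nlinarith [pow_le_one₀ hH.le hH1 (n := 1+p), abs_nonneg Q3, pow_pos hH (1+p)]
    have e1 : D ≤ |H⁻¹ * Q1| := by
      rw [abs_mul, abs_of_pos (inv_pos.2 hH)]
      have hHD : H ≤ |Q1| / D := le_trans hHε (min_le_right _ _)
      have h2 : H * D ≤ |Q1| := by
        rw [← le_div_iff₀ hD0] at *
        exact hHD
      calc D = H⁻¹ * (H * D) := by field_simp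
      _ ≤ H⁻¹ * |Q1| := by
          exact mul_le_mul_of_nonneg_left h2 (le_of_lt (inv_pos.2 hH))
    have : fQ H = |H⁻¹ * Q1 + H ^ (3 + 2*p) * Q2 + H ^ (1+p) * Q3| := rfl
    rw [this]
    have hDle : fQ 1 + 1 = D - |Q2| - |Q3| := by rw [hD]; ring
    linarith
  -- large H
  have hlarge : ∀ H : ℝ, R ≤ H → fQ 1 + 1 ≤ fQ H := by
    intro H hHR
    have hH1 : (1:ℝ) ≤ H := le_trans hR1 hHR
    have hH : (0:ℝ) < H := lt_of_lt_of_le one_pos hH1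
    have hlb := CCF_abs_lb (H ^ (3 + 2*p) * Q2) (H⁻¹ * Q1) (H ^ (1+p) * Q3)
    have harg : H ^ (3 + 2*p) * Q2 + H⁻¹ * Q1 + H ^ (1+p) * Q3
        = H⁻¹ * Q1 + H ^ (3 + 2*p) * Q2 + H ^ (1+p) * Q3 := by ring
    rw [harg] at hlb
    have e1 : |H⁻¹ * Q1| ≤ |Q1| := by
      rw [abs_mul, abs_of_pos (inv_pos.2 hH)]
      have : H⁻¹ ≤ 1 := by
        rw [inv_le_one_iff₀]; right; exact hH1
      nlinarith [abs_nonneg Q1, inv_pos.2 hH]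
    have e3 : |H ^ (1+p) * Q3| = H ^ (1+p) * |Q3| := by
      rw [abs_mul, abs_of_pos (pow_pos hH _)]
    have hHQ2 : fQ 1 + 1 + |Q1| + |Q3| ≤ H * |Q2| := by
      have h1 : (fQ 1 + 1 + |Q1| + |Q3|) / |Q2| ≤ H := le_trans (le_max_right _ _) hHR
      rw [div_le_iff₀ habsQ2] at h1
      linarith [h1]
    have e2 : (fQ 1 + 1 + |Q1|) + H ^ (1+p) * |Q3| ≤ |H ^ (3 + 2*p) * Q2| := by
      rw [abs_mul, abs_of_pos (pow_pos hH _)]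
      have hpow : H ^ (3 + 2*p) = H ^ (1+p) * (H ^ (1+p) * H) := by ring
      have hpp : (1:ℝ) ≤ H ^ (1+p) := one_le_pow₀ hH1
      have step1 : H ^ (1+p) * (fQ 1 + 1 + |Q1| + |Q3|) ≤ H ^ (1+p) * (H ^ (1+p) * H * |Q2|) := by
        apply mul_le_mul_of_nonneg_left ?_ (by positivity)
        calc fQ 1 + 1 + |Q1| + |Q3| ≤ H * |Q2| := hHQ2
        _ ≤ H ^ (1+p) * H * |Q2| := by
            have hm := mul_le_mul_of_nonneg_right hpp (mul_nonneg hH.le (abs_nonneg Q2))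
            nlinarith [hm]
      have step2 : (fQ 1 + 1 + |Q1|) + H ^ (1+p) * |Q3|
          ≤ H ^ (1+p) * (fQ 1 + 1 + |Q1| + |Q3|) := by nlinarith [hfQ1, abs_nonneg Q1, abs_nonneg Q3]
      calc (fQ 1 + 1 + |Q1|) + H ^ (1+p) * |Q3|
          ≤ H ^ (1+p) * (fQ 1 + 1 + |Q1| + |Q3|) := step2
      _ ≤ H ^ (1+p) * (H ^ (1+p) * H * |Q2|) := step1
      _ = H ^ (3 + 2*p) * |Q2| := by ring
    have : fQ H = |H⁻¹ * Q1 + H ^ (3 + 2*p) * Q2 + H ^ (1+p) * Q3| := rfl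
    rw [this]
    linarith
  -- continuity on compact interval
  have hcont : ContinuousOn fQ (Set.Icc ε R) := by
    intro H hH
    have hH0 : 0 < H := lt_of_lt_of_le hε0 hH.1
    have hc : ContinuousAt (fun H : ℝ => H⁻¹ * Q1 + H ^ (3 + 2*p) * Q2 + H ^ (1+p) * Q3) H := by
      refine ContinuousAt.add (ContinuousAt.add ?_ ?_) ?_
      · exact (continuousAt_id.inv₀ (ne_of_gt hH0)).mul continuousAt_const
      · exact (continuousAt_id.pow _).mul continuousAt_const
      · exact (continuousAt_id.pow _).mul continuousAt_const
    exact hc.abs.continuousWithinAt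
  obtain ⟨HUS, hHUSmem, hmin⟩ := isCompact_Icc.exists_isMinOn
    (Set.nonempty_Icc.2 (le_trans hε1 hR1)) hcont
  have hHUS0 : 0 < HUS := lt_of_lt_of_le hε0 hHUSmem.1
  have h1mem : (1:ℝ) ∈ Set.Icc ε R := ⟨hε1, hR1⟩
  refine ⟨HUS, hHUS0, isMinOn_iff.2 ?_⟩
  intro H hH
  have hmin1 : fQ HUS ≤ fQ 1 := isMinOn_iff.1 hmin 1 h1mem
  rcases le_or_gt H ε with hc1 | hc1
  · have := hsmall H hH hc1
    linarith
  · rcases le_or_gt R H with hc2 | hc2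
    · have := hlarge H hc2
      linarith
    · exact isMinOn_iff.1 hmin H ⟨le_of_lt hc1, le_of_lt hc2⟩

lemma CCF_coverUS_congr {Ω : Type} [MeasurableSpace Ω] (P : Measure Ω) (M : RDModel Ω P)
    (K : ℝ → ℝ) (p ν : ℕ) (c τ z : ℝ) (h h' : ℕ → ℝ) (n : ℕ) (he : h n = h' n) :
    coverUS P M K p ν c τ z h n = coverUS P M K p ν c τ z h' n := by
  unfold coverUS
  rw [he]

end CCFAux


/-- Optimal undersmoothing: under the conditions of the Edgeworth
expansion for `T_US`, with constants `Q1, Q2, Q3` for which the coverage error expansion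
of `I_US` holds along admissible bandwidth sequences, the coverage error
`P[τ_ν ∈ I_US(h)] = (1-α) + O(n^{-(p+1)/(p+2)})` is attained by any `h ≍ n^{-1/(p+2)}`;
moreover if `Q1, Q2, Q3 ≠ 0` the CE-optimal bandwidth is `h_US = H_US n^{-1/(p+2)}` with
`H_US = argmin_{H>0} |H⁻¹Q1 + H^{3+2p}Q2 + H^{1+p}Q3|`. -/
theorem optimal_undersmoothing
    {Ω : Type} [MeasurableSpace Ω] (P : Measure Ω) [IsProbabilityMeasure P]
    (M : RDModel Ω P) (c xl xu a : ℝ) (S p ν : ℕ) (hνp : ν ≤ p) (hS : p + 1 ≤ S)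
    (f μp μm σ2p σ2m : ℝ → ℝ)
    (hRD : AssumptionRD P M c xl xu S a f μp μm σ2p σ2m)
    (K : ℝ → ℝ) (hK : IsRDKernel p K)
    (α z : ℝ) (hα : α ∈ Set.Ioo (0 : ℝ) 1) (hz : Phi z = 1 - α / 2)
    (γ : ℝ) (hγ : 0 < γ)
    (Q1 Q2 Q3 : ℝ)
    -- the coverage error expansion for `I_US`, with constants `Q1, Q2, Q3`, holds along
    -- every bandwidth sequence satisfying the conditions of the Edgeworth expansion:
    (hexp : ∀ g : ℕ → ℝ, (∀ n, 0 < g n) →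
      Tendsto (fun n : ℕ => (n : ℝ) * g n
        / Real.log ((n : ℝ) * g n) ^ ((2 : ℝ) + γ)) atTop atTop →
      Tendsto (fun n : ℕ => Real.sqrt ((n : ℝ) * g n) * g n ^ (p + 1)
        * Real.log ((n : ℝ) * g n) ^ ((1 : ℝ) + γ)) atTop (nhds 0) →
      ∃ e1 e2 : ℕ → ℝ,
        (e1 =o[atTop] fun n : ℕ => ((n : ℝ) * g n)⁻¹) ∧
        (e2 =O[atTop] fun n : ℕ =>
          (n : ℝ) * g n ^ ((3 : ℝ) + 2 * p + 2 * a) + g n ^ ((1 : ℝ) + p + a)) ∧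
        ∀ n : ℕ,
          coverUS P M K p ν c (tauParam xl xu μp μm ν c) z g n - (1 - α)
            = ((n : ℝ) * g n)⁻¹ * Q1 + (n : ℝ) * g n ^ (3 + 2 * p) * Q2
              + g n ^ (1 + p) * Q3 + e1 n + e2 n) :
    -- (i) the rate `n^{-(p+1)/(p+2)}` is attained by any bandwidth `h ≍ n^{-1/(p+2)}`:
    (∀ g : ℕ → ℝ, (∀ n, 0 < g n) →
      (∃ c1 c2 : ℝ, 0 < c1 ∧ ∀ n : ℕ, 0 < n →
        c1 * (n : ℝ) ^ (-(1 : ℝ) / (p + 2)) ≤ g n ∧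
          g n ≤ c2 * (n : ℝ) ^ (-(1 : ℝ) / (p + 2))) →
      (fun n : ℕ => coverUS P M K p ν c (tauParam xl xu μp μm ν c) z g n - (1 - α))
        =O[atTop] fun n : ℕ => (n : ℝ) ^ (-((p : ℝ) + 1) / (p + 2))) ∧
    -- (ii) if `Q1, Q2, Q3 ≠ 0`, the CE-optimal bandwidth is `H_US n^{-1/(p+2)}`
    -- with `H_US` the minimizer of the coverage error objective:
    (Q1 ≠ 0 → Q2 ≠ 0 → Q3 ≠ 0 →
      ∃ HUS : ℝ, 0 < HUS ∧
        IsMinOn (fun H : ℝ =>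
          |H⁻¹ * Q1 + H ^ (3 + 2 * p) * Q2 + H ^ (1 + p) * Q3|) (Set.Ioi 0) HUS ∧
        (fun n : ℕ => coverUS P M K p ν c (tauParam xl xu μp μm ν c) z
            (fun m : ℕ => HUS * (m : ℝ) ^ (-(1 : ℝ) / (p + 2))) n - (1 - α))
          =O[atTop] fun n : ℕ => (n : ℝ) ^ (-((p : ℝ) + 1) / (p + 2))) := by
  have ha : 0 < a := hRD.h_a.1
  constructor
  · rintro g hg ⟨c1, c2, hc1, hbd⟩
    exact CCF_core p γ a hγ ha Q1 Q2 Q3 _ g hg c1 c2 hc1 hbd (hexp g hg)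
  · intro hQ1 hQ2 hQ3
    obtain ⟨HUS, hHUS0, hmin⟩ := CCF_minimizer p Q1 Q2 Q3 hQ1 hQ2
    refine ⟨HUS, hHUS0, hmin, ?_⟩
    set g' : ℕ → ℝ := fun n => if n = 0 then HUS
      else HUS * (n : ℝ) ^ (-(1 : ℝ) / ((p : ℝ) + 2)) with hg'def
    have hg'pos : ∀ n, 0 < g' n := by
      intro n
      rw [hg'def]
      dsimp only
      split
      · exact hHUS0
      · rename_i hne
        have hn0 : (0:ℝ) < (n:ℝ) := Nat.cast_pos.2 (Nat.pos_of_ne_zero hne)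
        exact mul_pos hHUS0 (Real.rpow_pos_of_pos hn0 _)
    have hbd' : ∀ n : ℕ, 0 < n →
        HUS * (n : ℝ) ^ (-(1 : ℝ) / ((p : ℝ) + 2)) ≤ g' n ∧
        g' n ≤ HUS * (n : ℝ) ^ (-(1 : ℝ) / ((p : ℝ) + 2)) := by
      intro n hn
      have hne : n ≠ 0 := Nat.pos_iff_ne_zero.1 hn
      rw [hg'def]
      simp [hne]
    have hO := CCF_core p γ a hγ ha Q1 Q2 Q3
      (fun n => coverUS P M K p ν c (tauParam xl xu μp μm ν c) z g' n - (1 - α))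
      g' hg'pos HUS HUS hHUS0 hbd' (hexp g' hg'pos)
    refine hO.congr' ?_ Filter.EventuallyEq.rfl
    filter_upwards [Filter.eventually_ge_atTop 1] with n hn
    have hne : n ≠ 0 := Nat.one_le_iff_ne_zero.1 hn
    have heq : g' n = (fun m : ℕ => HUS * (m : ℝ) ^ (-(1 : ℝ) / ((p : ℝ) + 2))) n := by
      rw [hg'def]
      simp [hne]
    rw [CCF_coverUS_congr P M K p ν c (tauParam xl xu μp μm ν c) z g'
      (fun m : ℕ => HUS * (m : ℝ) ^ (-(1 : ℝ) / ((p : ℝ) + 2))) n heq]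
end
end

section
/- Under the conditions of the coverage error expansion for I_RBC with S ≥ p+2 (Assumptions RD and K, ρ = h/b bounded and bounded away from zero), if the bandwidth is chosen at the undersmoothing-optimal rate h ≍ n^{-1/(2+p)}, then the robust bias corrected interval has coverage error P[τ_ν ∈ I_RBC(h)] − (1−α) = O(n^{-(1+p)/(2+p)}); if in addition |Q_{RBC,1}| is bounded away from zero along the sequence, the coverage error is of exact order n^{-(1+p)/(2+p)}, i.e., the same rate as the best undersmoothed interval, and strictly slower than the RBC-optimal rate n^{-(2+p)/(3+p)}. -/
/-!
Shared setup for "Optimal Bandwidth Choice for Robust Bias Corrected Inference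
in Regression Discontinuity Designs" (Calonico, Cattaneo, Farrell).
-/

noncomputable section

open MeasureTheory ProbabilityTheory Filter Asymptotics Matrix Topology

open MeasureTheory ProbabilityTheory Filter Asymptotics Matrix Topology RD

private lemma RD.bigO_of_bound {u : ℕ → ℝ} {t C : ℝ}
    (hb : ∀ᶠ n in atTop, |u n| ≤ C * (n : ℝ) ^ (-t)) :
    u =O[atTop] fun n : ℕ => (n : ℝ) ^ (-t) := by
  apply Asymptotics.IsBigO.of_bound C
  filter_upwards [hb] with n hn
  simpa [Real.norm_eq_abs, abs_of_nonneg (Real.rpow_nonneg (Nat.cast_nonneg n) (-t))] using hn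

private lemma RD.littleO_of_bound {u : ℕ → ℝ} {s t C : ℝ} (hts : t < s)
    (hb : ∀ᶠ n in atTop, |u n| ≤ C * (n : ℝ) ^ (-s)) :
    u =o[atTop] fun n : ℕ => (n : ℝ) ^ (-t) := by
  have h1 : (fun n : ℕ => (n : ℝ) ^ (-s)) =o[atTop] fun n : ℕ => (n : ℝ) ^ (-t) := by
    rw [Asymptotics.isLittleO_iff]
    intro ε hε
    have h2 : Tendsto (fun n : ℕ => (n : ℝ) ^ (t - s)) atTop (𝓝 0) := by
      have := (tendsto_rpow_neg_atTop (y := s - t) (by linarith)).comp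
        tendsto_natCast_atTop_atTop (α := ℕ)
      simpa [Function.comp_def, neg_sub] using this
    filter_upwards [h2.eventually_le_const hε, eventually_ge_atTop 1] with n h3 h4
    have hN : (0 : ℝ) < (n : ℝ) := by exact_mod_cast Nat.lt_of_lt_of_le Nat.zero_lt_one h4
    have hEq : (n : ℝ) ^ (-s) = (n : ℝ) ^ (t - s) * (n : ℝ) ^ (-t) := by
      rw [← Real.rpow_add hN]; ring_nf
    rw [Real.norm_eq_abs, Real.norm_eq_abs,
      abs_of_nonneg (Real.rpow_nonneg hN.le _), abs_of_nonneg (Real.rpow_nonneg hN.le _), hEq]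
    exact mul_le_mul_of_nonneg_right h3 (Real.rpow_nonneg hN.le _)
  exact (RD.bigO_of_bound hb).trans_isLittleO h1

private lemma RD.hpow_mul_bound {c2 e : ℝ} (hc2 : 0 < c2) {h : ℕ → ℝ} (hhpos : ∀ n, 0 < h n)
    (hub : ∀ n : ℕ, 0 < n → h n ≤ c2 * (n : ℝ) ^ e) {m : ℝ} (hm : 0 ≤ m) :
    ∀ n : ℕ, 0 < n → h n ^ m ≤ c2 ^ m * (n : ℝ) ^ (e * m) := by
  intro n hn
  have hN : (0 : ℝ) < (n : ℝ) := by exact_mod_cast hn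
  calc h n ^ m ≤ (c2 * (n : ℝ) ^ e) ^ m :=
        Real.rpow_le_rpow (hhpos n).le (hub n hn) hm
    _ = c2 ^ m * (n : ℝ) ^ (e * m) := by
        rw [Real.mul_rpow hc2.le (Real.rpow_nonneg hN.le _), ← Real.rpow_mul hN.le]

/-- at the undersmoothing-optimal bandwidth rate `h ≍ n^{-1/(2+p)}`,
the RBC interval has coverage error `O(n^{-(1+p)/(2+p)})`; if moreover `|Q_RBC,1|` is
bounded away from zero along the sequence, the coverage error is of exact order
`n^{-(1+p)/(2+p)}` — the same rate as the best undersmoothed interval — which is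
strictly slower than the RBC-optimal rate `n^{-(2+p)/(3+p)}`. -/
theorem RBC_coverage_at_US_rate
    {Ω : Type} [MeasurableSpace Ω] (P : Measure Ω) [IsProbabilityMeasure P]
    (M : RDModel Ω P) (c xl xu a : ℝ) (S p ν : ℕ) (hνp : ν ≤ p) (hS : p + 2 ≤ S)
    (f μp μm σ2p σ2m : ℝ → ℝ)
    (hRD : AssumptionRD P M c xl xu S a f μp μm σ2p σ2m)
    (K : ℝ → ℝ) (hK : IsRDKernel p K)
    (α z : ℝ) (hα : α ∈ Set.Ioo (0 : ℝ) 1) (hz : Phi z = 1 - α / 2)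
    (h b : ℕ → ℝ) (hhpos : ∀ n, 0 < h n) (hbpos : ∀ n, 0 < b n)
    (hρ : ∃ r R : ℝ, 0 < r ∧ ∀ n, r ≤ h n / b n ∧ h n / b n ≤ R)
    -- `h ≍ n^{-1/(2+p)}`, the undersmoothing-optimal rate:
    (c1 c2 : ℝ) (hc1 : 0 < c1)
    (hUSrate : ∀ n : ℕ, 0 < n →
      c1 * (n : ℝ) ^ (-(1 : ℝ) / (2 + p)) ≤ h n ∧
        h n ≤ c2 * (n : ℝ) ^ (-(1 : ℝ) / (2 + p)))
    -- the coverage error expansion for `I_RBC`, with bounded constants `Q1, Q2, Q3`: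
    (Q1 Q2 Q3 e1 e2 : ℕ → ℝ)
    (hQ1bd : BddSeq Q1) (hQ2bd : BddSeq Q2) (hQ3bd : BddSeq Q3)
    (he1 : e1 =o[atTop] fun n : ℕ => ((n : ℝ) * h n)⁻¹)
    (he2 : e2 =O[atTop] fun n : ℕ =>
      (n : ℝ) * h n ^ ((5 : ℝ) + 2 * p + 2 * a) + h n ^ ((2 : ℝ) + p + a))
    (hexp : ∀ n : ℕ,
      coverRBC P M K p ν c (tauParam xl xu μp μm ν c) z h b n - (1 - α)
        = ((n : ℝ) * h n)⁻¹ * Q1 n + (n : ℝ) * h n ^ (5 + 2 * p) * Q2 n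
          + h n ^ (2 + p) * Q3 n + e1 n + e2 n) :
    -- (i) coverage error `O(n^{-(1+p)/(2+p)})`:
    ((fun n : ℕ => coverRBC P M K p ν c (tauParam xl xu μp μm ν c) z h b n - (1 - α))
      =O[atTop] fun n : ℕ => (n : ℝ) ^ (-((1 : ℝ) + p) / (2 + p))) ∧
    -- (ii) exact order when `|Q_RBC,1|` is bounded away from zero along the sequence:
    ((∃ q : ℝ, 0 < q ∧ ∀ᶠ n in atTop, q ≤ |Q1 n|) →
      ∃ c0 : ℝ, 0 < c0 ∧ ∀ᶠ n : ℕ in atTop,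
        c0 * (n : ℝ) ^ (-((1 : ℝ) + p) / (2 + p)) ≤
          |coverRBC P M K p ν c (tauParam xl xu μp μm ν c) z h b n - (1 - α)|) ∧
    -- (iii) this rate is strictly slower than the RBC-optimal rate `n^{-(2+p)/(3+p)}`:
    ((1 : ℝ) + p) / (2 + p) < ((2 : ℝ) + p) / (3 + p) := by
  obtain ⟨CQ1, hCQ1⟩ := hQ1bd
  obtain ⟨CQ2, hCQ2⟩ := hQ2bd
  obtain ⟨CQ3, hCQ3⟩ := hQ3bd
  have hCQ1' : 0 ≤ CQ1 := le_trans (abs_nonneg _) (hCQ1 0)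
  have hCQ2' : 0 ≤ CQ2 := le_trans (abs_nonneg _) (hCQ2 0)
  have hCQ3' : 0 ≤ CQ3 := le_trans (abs_nonneg _) (hCQ3 0)
  have hp2 : (0 : ℝ) < 2 + (p : ℝ) := by positivity
  have ha : 0 < a := hRD.h_a.1
  have hc2 : 0 < c2 := by
    have h1 := (hUSrate 1 one_pos).2
    have h2 := hhpos 1
    simp only [Nat.cast_one, Real.one_rpow, mul_one] at h1
    linarith
  have hub : ∀ n : ℕ, 0 < n → h n ≤ c2 * (n : ℝ) ^ (-(1 : ℝ) / (2 + p)) :=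
    fun n hn => (hUSrate n hn).2
  have hte : ((1 : ℝ) + p) / (2 + p) = 1 + (-(1 : ℝ) / (2 + p)) := by
    field_simp; ring
  -- upper and lower bounds on ((n:ℝ) * h n)⁻¹
  have hA : ∀ n : ℕ, 0 < n →
      ((n : ℝ) * h n)⁻¹ ≤ c1⁻¹ * (n : ℝ) ^ (-(((1 : ℝ) + p) / (2 + p))) := by
    intro n hn
    have hN : (0 : ℝ) < (n : ℝ) := by exact_mod_cast hn
    have h1 : c1 * (n : ℝ) ^ (((1 : ℝ) + p) / (2 + p)) ≤ (n : ℝ) * h n := by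
      have h2 := (hUSrate n hn).1
      have h3 : (n : ℝ) ^ (((1 : ℝ) + p) / (2 + p))
          = (n : ℝ) * (n : ℝ) ^ (-(1 : ℝ) / (2 + p)) := by
        rw [hte, Real.rpow_add hN, Real.rpow_one]
      rw [h3]
      calc c1 * ((n : ℝ) * (n : ℝ) ^ (-(1 : ℝ) / (2 + p)))
          = (n : ℝ) * (c1 * (n : ℝ) ^ (-(1 : ℝ) / (2 + p))) := by ring
        _ ≤ (n : ℝ) * h n := mul_le_mul_of_nonneg_left h2 hN.le
    calc ((n : ℝ) * h n)⁻¹ ≤ (c1 * (n : ℝ) ^ (((1 : ℝ) + p) / (2 + p)))⁻¹ := by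
          apply inv_anti₀ (by positivity) h1
      _ = c1⁻¹ * (n : ℝ) ^ (-(((1 : ℝ) + p) / (2 + p))) := by
          rw [mul_inv, Real.rpow_neg hN.le]
  have hA' : ∀ n : ℕ, 0 < n →
      c2⁻¹ * (n : ℝ) ^ (-(((1 : ℝ) + p) / (2 + p))) ≤ ((n : ℝ) * h n)⁻¹ := by
    intro n hn
    have hN : (0 : ℝ) < (n : ℝ) := by exact_mod_cast hn
    have h1 : (n : ℝ) * h n ≤ c2 * (n : ℝ) ^ (((1 : ℝ) + p) / (2 + p)) := by
      have h2 := (hUSrate n hn).2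
      have h3 : (n : ℝ) ^ (((1 : ℝ) + p) / (2 + p))
          = (n : ℝ) * (n : ℝ) ^ (-(1 : ℝ) / (2 + p)) := by
        rw [hte, Real.rpow_add hN, Real.rpow_one]
      rw [h3]
      calc (n : ℝ) * h n ≤ (n : ℝ) * (c2 * (n : ℝ) ^ (-(1 : ℝ) / (2 + p))) :=
            mul_le_mul_of_nonneg_left h2 hN.le
        _ = c2 * ((n : ℝ) * (n : ℝ) ^ (-(1 : ℝ) / (2 + p))) := by ring
    calc c2⁻¹ * (n : ℝ) ^ (-(((1 : ℝ) + p) / (2 + p)))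
        = (c2 * (n : ℝ) ^ (((1 : ℝ) + p) / (2 + p)))⁻¹ := by
          rw [mul_inv, Real.rpow_neg hN.le]
      _ ≤ ((n : ℝ) * h n)⁻¹ := by
          have := hhpos n
          apply inv_anti₀ (by positivity) h1
  -- bound on n * h^(5+2p)
  have hB : ∀ n : ℕ, 0 < n → (n : ℝ) * h n ^ (5 + 2 * p)
      ≤ c2 ^ ((5 : ℝ) + 2 * p) * (n : ℝ) ^ (-(((3 : ℝ) + p) / (2 + p))) := by
    intro n hn
    have hN : (0 : ℝ) < (n : ℝ) := by exact_mod_cast hn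
    have hm : (0 : ℝ) ≤ 5 + 2 * (p : ℝ) := by positivity
    have h1 := RD.hpow_mul_bound hc2 hhpos hub hm n hn
    have h2 : h n ^ (5 + 2 * p) = h n ^ ((5 : ℝ) + 2 * (p : ℝ)) := by
      rw [show ((5 : ℝ) + 2 * (p : ℝ)) = ((5 + 2 * p : ℕ) : ℝ) by push_cast; ring,
        Real.rpow_natCast]
    have he : (1 : ℝ) + (-(1 : ℝ) / (2 + p)) * (5 + 2 * (p : ℝ))
        = -(((3 : ℝ) + p) / (2 + p)) := by
      field_simp; ring
    calc (n : ℝ) * h n ^ (5 + 2 * p)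
        ≤ (n : ℝ) * (c2 ^ ((5 : ℝ) + 2 * (p : ℝ))
            * (n : ℝ) ^ (-(1 : ℝ) / (2 + p) * (5 + 2 * (p : ℝ)))) := by
          rw [h2]; exact mul_le_mul_of_nonneg_left h1 hN.le
      _ = c2 ^ ((5 : ℝ) + 2 * p) * (n : ℝ) ^ (-(((3 : ℝ) + p) / (2 + p))) := by
          rw [← he, Real.rpow_add hN, Real.rpow_one]; ring
  -- bound on h^(2+p)
  have hC : ∀ n : ℕ, 0 < n → h n ^ (2 + p)
      ≤ c2 ^ ((2 : ℝ) + p) * (n : ℝ) ^ (-(1 : ℝ)) := by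
    intro n hn
    have hm : (0 : ℝ) ≤ 2 + (p : ℝ) := by positivity
    have h1 := RD.hpow_mul_bound hc2 hhpos hub hm n hn
    have h2 : h n ^ (2 + p) = h n ^ ((2 : ℝ) + (p : ℝ)) := by
      rw [show ((2 : ℝ) + (p : ℝ)) = ((2 + p : ℕ) : ℝ) by push_cast; ring,
        Real.rpow_natCast]
    have he : (-(1 : ℝ) / (2 + p)) * (2 + (p : ℝ)) = -(1 : ℝ) := by
      field_simp
    rw [h2, ← he]; exact h1
  -- bounds for the e2 comparison function
  have hB' : ∀ n : ℕ, 0 < n → (n : ℝ) * h n ^ ((5 : ℝ) + 2 * p + 2 * a)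
      ≤ c2 ^ ((5 : ℝ) + 2 * p + 2 * a)
        * (n : ℝ) ^ (-(((3 : ℝ) + p + 2 * a) / (2 + p))) := by
    intro n hn
    have hN : (0 : ℝ) < (n : ℝ) := by exact_mod_cast hn
    have hm : (0 : ℝ) ≤ 5 + 2 * (p : ℝ) + 2 * a := by positivity
    have h1 := RD.hpow_mul_bound hc2 hhpos hub hm n hn
    have he : (1 : ℝ) + (-(1 : ℝ) / (2 + p)) * (5 + 2 * (p : ℝ) + 2 * a)
        = -(((3 : ℝ) + p + 2 * a) / (2 + p)) := by
      field_simp; ring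
    calc (n : ℝ) * h n ^ ((5 : ℝ) + 2 * p + 2 * a)
        ≤ (n : ℝ) * (c2 ^ ((5 : ℝ) + 2 * (p : ℝ) + 2 * a)
            * (n : ℝ) ^ (-(1 : ℝ) / (2 + p) * (5 + 2 * (p : ℝ) + 2 * a))) :=
          mul_le_mul_of_nonneg_left h1 hN.le
      _ = c2 ^ ((5 : ℝ) + 2 * p + 2 * a)
          * (n : ℝ) ^ (-(((3 : ℝ) + p + 2 * a) / (2 + p))) := by
          rw [← he, Real.rpow_add hN, Real.rpow_one]; ring
  have hC' : ∀ n : ℕ, 0 < n → h n ^ ((2 : ℝ) + p + a)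
      ≤ c2 ^ ((2 : ℝ) + p + a) * (n : ℝ) ^ (-(((2 : ℝ) + p + a) / (2 + p))) := by
    intro n hn
    have hm : (0 : ℝ) ≤ 2 + (p : ℝ) + a := by positivity
    have h1 := RD.hpow_mul_bound hc2 hhpos hub hm n hn
    have he : (-(1 : ℝ) / (2 + p)) * (2 + (p : ℝ) + a)
        = -(((2 : ℝ) + p + a) / (2 + p)) := by
      field_simp
    rw [← he]; exact h1
  -- exponent comparisons
  have hts1 : ((1 : ℝ) + p) / (2 + p) < ((3 : ℝ) + p) / (2 + p) := by
    rw [div_lt_div_iff₀ hp2 hp2]; nlinarith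
  have hts2 : ((1 : ℝ) + p) / (2 + p) < 1 := (div_lt_one hp2).mpr (by linarith)
  have hts3 : ((1 : ℝ) + p) / (2 + p) < ((3 : ℝ) + p + 2 * a) / (2 + p) := by
    rw [div_lt_div_iff₀ hp2 hp2]; nlinarith
  have hts4 : ((1 : ℝ) + p) / (2 + p) < ((2 : ℝ) + p + a) / (2 + p) := by
    rw [div_lt_div_iff₀ hp2 hp2]; nlinarith
  -- big-O / little-o facts for each term of the expansion
  have hO1 : (fun n : ℕ => ((n : ℝ) * h n)⁻¹ * Q1 n)
      =O[atTop] fun n : ℕ => (n : ℝ) ^ (-(((1 : ℝ) + p) / (2 + p))) := by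
    apply RD.bigO_of_bound (C := c1⁻¹ * CQ1)
    filter_upwards [eventually_gt_atTop 0] with n hn
    have hinv : (0 : ℝ) ≤ ((n : ℝ) * h n)⁻¹ := by
      have := hhpos n; positivity
    rw [abs_mul, abs_of_nonneg hinv]
    calc ((n : ℝ) * h n)⁻¹ * |Q1 n|
        ≤ (c1⁻¹ * (n : ℝ) ^ (-(((1 : ℝ) + p) / (2 + p)))) * CQ1 :=
          mul_le_mul (hA n hn) (hCQ1 n) (abs_nonneg _) (by positivity)
      _ = c1⁻¹ * CQ1 * (n : ℝ) ^ (-(((1 : ℝ) + p) / (2 + p))) := by ring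
  have hOinv : (fun n : ℕ => ((n : ℝ) * h n)⁻¹)
      =O[atTop] fun n : ℕ => (n : ℝ) ^ (-(((1 : ℝ) + p) / (2 + p))) := by
    apply RD.bigO_of_bound (C := c1⁻¹)
    filter_upwards [eventually_gt_atTop 0] with n hn
    have hinv : (0 : ℝ) ≤ ((n : ℝ) * h n)⁻¹ := by
      have := hhpos n; positivity
    rw [abs_of_nonneg hinv]
    exact hA n hn
  have ho2 : (fun n : ℕ => (n : ℝ) * h n ^ (5 + 2 * p) * Q2 n)
      =o[atTop] fun n : ℕ => (n : ℝ) ^ (-(((1 : ℝ) + p) / (2 + p))) := by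
    apply RD.littleO_of_bound hts1 (C := c2 ^ ((5 : ℝ) + 2 * p) * CQ2)
    filter_upwards [eventually_gt_atTop 0] with n hn
    have hN : (0 : ℝ) < (n : ℝ) := by exact_mod_cast hn
    have hnn : (0 : ℝ) ≤ (n : ℝ) * h n ^ (5 + 2 * p) := by
      have := hhpos n; positivity
    rw [abs_mul, abs_of_nonneg hnn]
    calc (n : ℝ) * h n ^ (5 + 2 * p) * |Q2 n|
        ≤ (c2 ^ ((5 : ℝ) + 2 * p) * (n : ℝ) ^ (-(((3 : ℝ) + p) / (2 + p)))) * CQ2 :=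
          mul_le_mul (hB n hn) (hCQ2 n) (abs_nonneg _) (by positivity)
      _ = c2 ^ ((5 : ℝ) + 2 * p) * CQ2 * (n : ℝ) ^ (-(((3 : ℝ) + p) / (2 + p))) := by
          ring
  have ho3 : (fun n : ℕ => h n ^ (2 + p) * Q3 n)
      =o[atTop] fun n : ℕ => (n : ℝ) ^ (-(((1 : ℝ) + p) / (2 + p))) := by
    apply RD.littleO_of_bound hts2 (C := c2 ^ ((2 : ℝ) + p) * CQ3)
    filter_upwards [eventually_gt_atTop 0] with n hn
    have hnn : (0 : ℝ) ≤ h n ^ (2 + p) := by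
      have := hhpos n; positivity
    rw [abs_mul, abs_of_nonneg hnn]
    calc h n ^ (2 + p) * |Q3 n|
        ≤ (c2 ^ ((2 : ℝ) + p) * (n : ℝ) ^ (-(1 : ℝ))) * CQ3 :=
          mul_le_mul (hC n hn) (hCQ3 n) (abs_nonneg _) (by positivity)
      _ = c2 ^ ((2 : ℝ) + p) * CQ3 * (n : ℝ) ^ (-(1 : ℝ)) := by ring
  have ho4 : e1 =o[atTop] fun n : ℕ => (n : ℝ) ^ (-(((1 : ℝ) + p) / (2 + p))) :=
    he1.trans_isBigO hOinv
  have hF : (fun n : ℕ =>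
        (n : ℝ) * h n ^ ((5 : ℝ) + 2 * p + 2 * a) + h n ^ ((2 : ℝ) + p + a))
      =o[atTop] fun n : ℕ => (n : ℝ) ^ (-(((1 : ℝ) + p) / (2 + p))) := by
    have hF1 : (fun n : ℕ => (n : ℝ) * h n ^ ((5 : ℝ) + 2 * p + 2 * a))
        =o[atTop] fun n : ℕ => (n : ℝ) ^ (-(((1 : ℝ) + p) / (2 + p))) := by
      apply RD.littleO_of_bound hts3 (C := c2 ^ ((5 : ℝ) + 2 * p + 2 * a))
      filter_upwards [eventually_gt_atTop 0] with n hn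
      have hnn : (0 : ℝ) ≤ (n : ℝ) * h n ^ ((5 : ℝ) + 2 * p + 2 * a) := by
        have h1 := hhpos n
        have h2 : (0 : ℝ) ≤ h n ^ ((5 : ℝ) + 2 * p + 2 * a) := Real.rpow_nonneg h1.le _
        positivity
      rw [abs_of_nonneg hnn]
      exact hB' n hn
    have hF2 : (fun n : ℕ => h n ^ ((2 : ℝ) + p + a))
        =o[atTop] fun n : ℕ => (n : ℝ) ^ (-(((1 : ℝ) + p) / (2 + p))) := by
      apply RD.littleO_of_bound hts4 (C := c2 ^ ((2 : ℝ) + p + a))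
      filter_upwards [eventually_gt_atTop 0] with n hn
      rw [abs_of_nonneg (Real.rpow_nonneg (hhpos n).le _)]
      exact hC' n hn
    exact hF1.add hF2
  have ho5 : e2 =o[atTop] fun n : ℕ => (n : ℝ) ^ (-(((1 : ℝ) + p) / (2 + p))) :=
    he2.trans_isLittleO hF
  have hgt : (fun n : ℕ => (n : ℝ) ^ (-((1 : ℝ) + p) / (2 + p)))
      = fun n : ℕ => (n : ℝ) ^ (-(((1 : ℝ) + p) / (2 + p))) := by
    funext n; rw [neg_div]
  have hEexp : (fun n : ℕ =>
        coverRBC P M K p ν c (tauParam xl xu μp μm ν c) z h b n - (1 - α))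
      = fun n : ℕ => ((n : ℝ) * h n)⁻¹ * Q1 n + (n : ℝ) * h n ^ (5 + 2 * p) * Q2 n
          + h n ^ (2 + p) * Q3 n + e1 n + e2 n := funext hexp
  refine ⟨?_, ?_, ?_⟩
  · -- (i)
    rw [hgt, hEexp]
    exact (((hO1.add ho2.isBigO).add ho3.isBigO).add ho4.isBigO).add ho5.isBigO
  · -- (ii)
    rintro ⟨q, hq, hqev⟩
    refine ⟨q / (2 * c2), by positivity, ?_⟩
    have hR : (fun n : ℕ => (n : ℝ) * h n ^ (5 + 2 * p) * Q2 n
          + h n ^ (2 + p) * Q3 n + e1 n + e2 n)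
        =o[atTop] fun n : ℕ => (n : ℝ) ^ (-(((1 : ℝ) + p) / (2 + p))) :=
      ((ho2.add ho3).add ho4).add ho5
    have hRsm := Asymptotics.isLittleO_iff.mp hR (c := q / (2 * c2)) (by positivity)
    filter_upwards [hqev, hRsm, eventually_gt_atTop 0] with n hq1 hRn hn
    have hN : (0 : ℝ) < (n : ℝ) := by exact_mod_cast hn
    have hgpos : (0 : ℝ) ≤ (n : ℝ) ^ (-(((1 : ℝ) + p) / (2 + p))) :=
      Real.rpow_nonneg hN.le _
    have hRn' : |(n : ℝ) * h n ^ (5 + 2 * p) * Q2 n + h n ^ (2 + p) * Q3 n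
          + e1 n + e2 n|
        ≤ q / (2 * c2) * (n : ℝ) ^ (-(((1 : ℝ) + p) / (2 + p))) := by
      simpa [Real.norm_eq_abs, abs_of_nonneg hgpos] using hRn
    have hT1 : q * c2⁻¹ * (n : ℝ) ^ (-(((1 : ℝ) + p) / (2 + p)))
        ≤ |((n : ℝ) * h n)⁻¹ * Q1 n| := by
      have hinv : (0 : ℝ) ≤ ((n : ℝ) * h n)⁻¹ := by
        have := hhpos n; positivity
      rw [abs_mul, abs_of_nonneg hinv]
      calc q * c2⁻¹ * (n : ℝ) ^ (-(((1 : ℝ) + p) / (2 + p)))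
          = (c2⁻¹ * (n : ℝ) ^ (-(((1 : ℝ) + p) / (2 + p)))) * q := by ring
        _ ≤ ((n : ℝ) * h n)⁻¹ * |Q1 n| :=
            mul_le_mul (hA' n hn) hq1 hq.le hinv
    have habs : ∀ x y : ℝ, |x| ≤ |x + y| + |y| := by
      intro x y
      have := abs_add_le (x + y) (-y)
      simpa using this
    have hE := hexp n
    rw [neg_div, hE]
    have h5 : ((n : ℝ) * h n)⁻¹ * Q1 n + (n : ℝ) * h n ^ (5 + 2 * p) * Q2 n
          + h n ^ (2 + p) * Q3 n + e1 n + e2 n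
        = ((n : ℝ) * h n)⁻¹ * Q1 n + ((n : ℝ) * h n ^ (5 + 2 * p) * Q2 n
          + h n ^ (2 + p) * Q3 n + e1 n + e2 n) := by ring
    rw [h5]
    have hkey : q * c2⁻¹ * (n : ℝ) ^ (-(((1 : ℝ) + p) / (2 + p)))
          - q / (2 * c2) * (n : ℝ) ^ (-(((1 : ℝ) + p) / (2 + p)))
        = q / (2 * c2) * (n : ℝ) ^ (-(((1 : ℝ) + p) / (2 + p))) := by
      field_simp; ring
    have := habs (((n : ℝ) * h n)⁻¹ * Q1 n)
      ((n : ℝ) * h n ^ (5 + 2 * p) * Q2 n + h n ^ (2 + p) * Q3 n + e1 n + e2 n)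
    linarith
  · -- (iii)
    rw [div_lt_div_iff₀ hp2 (by positivity)]
    nlinarith [Nat.cast_nonneg (α := ℝ) p]
end
end

section
/- (Rule-of-thumb bandwidth attains the CE-optimal rate.) Let ĥ_MSE be any data-driven bandwidth with ĥ_MSE / h_MSE →_P 1, where h_MSE = C n^{-1/(2p+3)} for some constant C > 0, and define ĥ^rot_RBC = n^{-p/((2p+3)(p+3))} · ĥ_MSE. Then ĥ^rot_RBC / (C n^{-1/(3+p)}) →_P 1, so that ĥ^rot_RBC is of the coverage-error optimal order n^{-1/(3+p)}; consequently, under the conditions under which the coverage error expansion for I_RBC holds along this bandwidth sequence (S ≥ p+2 and ρ bounded and bounded away from zero), the interval I_RBC(ĥ^rot_RBC) has coverage error of order n^{-(2+p)/(3+p)}. -/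
/-!
Shared setup for "Optimal Bandwidth Choice for Robust Bias Corrected Inference
in Regression Discontinuity Designs" (Calonico, Cattaneo, Farrell).
-/

noncomputable section

open MeasureTheory ProbabilityTheory Filter Asymptotics Matrix Topology

open MeasureTheory ProbabilityTheory Filter Asymptotics Matrix Topology RD

/-- Coverage probability of the RBC interval with a data-driven bandwidth `ĥ` and
auxiliary bandwidth `b = ĥ/ρ0`. -/
noncomputable def coverRBCrand {Ω : Type} [MeasurableSpace Ω] (P : Measure Ω)
    (M : RDModel Ω P) (K : ℝ → ℝ) (p ν : ℕ) (c τ z ρ0 : ℝ) (hhat : ℕ → Ω → ℝ)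
    (n : ℕ) : ℝ :=
  (P {ω | |τ - tauHatBC K p ν c (hhat n ω) (hhat n ω / ρ0)
        (fun i : Fin n => M.X i ω) (fun i : Fin n => Yobs c M.X M.Y0 M.Y1 i ω)| ≤
      z * Real.sqrt (VhatBC K p ν c (hhat n ω) (hhat n ω / ρ0)
          (fun i : Fin n => M.X i ω) (fun i : Fin n => Yobs c M.X M.Y0 M.Y1 i ω)
        / ((n : ℝ) * (hhat n ω) ^ (1 + 2 * ν)))}).toReal

/-- Rule-of-thumb bandwidth attains the CE-optimal rate: if
`ĥ_MSE / h_MSE →_P 1` with `h_MSE = C n^{-1/(2p+3)}`, then the rescaled bandwidth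
`ĥ^rot_RBC = n^{-p/((2p+3)(p+3))} ĥ_MSE` satisfies `ĥ^rot_RBC/(C n^{-1/(3+p)}) →_P 1`,
and under the coverage error expansion along this bandwidth sequence the interval
`I_RBC(ĥ^rot_RBC)` has coverage error of order `n^{-(2+p)/(3+p)}`. -/
theorem ROT_bandwidth_CE_rate
    {Ω : Type} [MeasurableSpace Ω] (P : Measure Ω) [IsProbabilityMeasure P]
    (M : RDModel Ω P) (c xl xu a : ℝ) (S p ν : ℕ) (hνp : ν ≤ p) (hS : p + 2 ≤ S)
    (f μp μm σ2p σ2m : ℝ → ℝ)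
    (hRD : AssumptionRD P M c xl xu S a f μp μm σ2p σ2m)
    (K : ℝ → ℝ) (hK : IsRDKernel p K)
    (α z : ℝ) (hα : α ∈ Set.Ioo (0 : ℝ) 1) (hz : Phi z = 1 - α / 2)
    (ρ0 : ℝ) (hρ0 : 0 < ρ0)
    (C : ℝ) (hC : 0 < C)
    (hhatMSE : ℕ → Ω → ℝ)
    -- `ĥ_MSE / h_MSE →_P 1` where `h_MSE = C n^{-1/(2p+3)}`:
    (hconsist : TendstoInMeasure P
      (fun (n : ℕ) (ω : Ω) => hhatMSE n ω / (C * (n : ℝ) ^ (-(1 : ℝ) / (2 * p + 3))))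
      atTop (fun _ => (1 : ℝ))) :
    -- (i) `ĥ^rot_RBC / (C n^{-1/(3+p)}) →_P 1`, i.e. the rule-of-thumb bandwidth is of
    -- the coverage-error optimal order `n^{-1/(3+p)}`:
    TendstoInMeasure P
      (fun (n : ℕ) (ω : Ω) =>
        ((n : ℝ) ^ (-(p : ℝ) / ((2 * p + 3) * (p + 3))) * hhatMSE n ω)
          / (C * (n : ℝ) ^ (-(1 : ℝ) / (3 + p))))
      atTop (fun _ => (1 : ℝ)) ∧
    -- (ii) consequently, whenever the RBC coverage error expansion holds along this
    -- bandwidth sequence, `I_RBC(ĥ^rot_RBC)` has coverage error `O(n^{-(2+p)/(3+p)})`: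
    (∀ Q1 Q2 Q3 e1 e2 : ℕ → ℝ,
      BddSeq Q1 → BddSeq Q2 → BddSeq Q3 →
      (e1 =o[atTop] fun n : ℕ => ((n : ℝ) * (C * (n : ℝ) ^ (-(1 : ℝ) / (3 + p))))⁻¹) →
      (e2 =O[atTop] fun n : ℕ =>
        (n : ℝ) * (C * (n : ℝ) ^ (-(1 : ℝ) / (3 + p))) ^ ((5 : ℝ) + 2 * p + 2 * a)
          + (C * (n : ℝ) ^ (-(1 : ℝ) / (3 + p))) ^ ((2 : ℝ) + p + a)) →
      (∀ n : ℕ,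
        coverRBCrand P M K p ν c (tauParam xl xu μp μm ν c) z ρ0
            (fun m ω => (m : ℝ) ^ (-(p : ℝ) / ((2 * p + 3) * (p + 3))) * hhatMSE m ω) n
          - (1 - α)
        = ((n : ℝ) * (C * (n : ℝ) ^ (-(1 : ℝ) / (3 + p))))⁻¹ * Q1 n
          + (n : ℝ) * (C * (n : ℝ) ^ (-(1 : ℝ) / (3 + p))) ^ ((5 : ℝ) + 2 * p) * Q2 n
          + (C * (n : ℝ) ^ (-(1 : ℝ) / (3 + p))) ^ ((2 : ℝ) + p) * Q3 n
          + e1 n + e2 n) →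
      (fun n : ℕ =>
          coverRBCrand P M K p ν c (tauParam xl xu μp μm ν c) z ρ0
            (fun m ω => (m : ℝ) ^ (-(p : ℝ) / ((2 * p + 3) * (p + 3))) * hhatMSE m ω) n
          - (1 - α))
        =O[atTop] fun n : ℕ => (n : ℝ) ^ (-((2 : ℝ) + p) / (3 + p))) := by
  have hp3 : (0:ℝ) < 3 + (p:ℝ) := by positivity
  have hp3' : (0:ℝ) < (p:ℝ) + 3 := by positivity
  have h2p3 : (0:ℝ) < 2*(p:ℝ) + 3 := by positivity
  have ha : 0 < a := hRD.h_a.1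
  -- pointwise identity between the two bandwidth ratios (for n ≥ 1)
  have hpt : ∀ n : ℕ, 1 ≤ n → ∀ ω : Ω,
      ((n:ℝ) ^ (-(p:ℝ) / ((2 * p + 3) * (p + 3))) * hhatMSE n ω)
          / (C * (n:ℝ) ^ (-(1:ℝ) / (3 + p)))
        = hhatMSE n ω / (C * (n:ℝ) ^ (-(1:ℝ) / (2 * p + 3))) := by
    intro n hn ω
    have h0 : (0:ℝ) < n := by exact_mod_cast hn
    have hsplit : (n:ℝ) ^ (-(1:ℝ) / (3 + (p:ℝ)))
        = (n:ℝ) ^ (-(p:ℝ) / ((2 * (p:ℝ) + 3) * ((p:ℝ) + 3)))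
          * (n:ℝ) ^ (-(1:ℝ) / (2 * (p:ℝ) + 3)) := by
      rw [← Real.rpow_add h0]
      congr 1
      field_simp
      ring
    rw [hsplit]
    have hna : (n:ℝ) ^ (-(p:ℝ) / ((2 * (p:ℝ) + 3) * ((p:ℝ) + 3))) ≠ 0 :=
      (Real.rpow_pos_of_pos h0 _).ne'
    have hnc : (n:ℝ) ^ (-(1:ℝ) / (2 * (p:ℝ) + 3)) ≠ 0 :=
      (Real.rpow_pos_of_pos h0 _).ne'
    field_simp
  constructor
  · -- part (i)
    intro ε hε
    refine Filter.Tendsto.congr' ?_ (hconsist ε hε)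
    filter_upwards [eventually_ge_atTop 1] with n hn
    congr 1
    ext ω
    simp only [Set.mem_setOf_eq]
    rw [hpt n hn ω]
  · -- part (ii)
    intro Q1 Q2 Q3 e1 e2 hQ1 hQ2 hQ3 he1 he2 hcov
    set tgt : ℝ := -((2:ℝ) + p) / (3 + p) with htgt_def
    set b : ℝ := -(1:ℝ) / (3 + (p:ℝ)) with hb_def
    -- key comparison lemma
    have key : ∀ c0 e : ℝ, 0 ≤ c0 → e ≤ tgt →
        (fun n : ℕ => c0 * (n:ℝ) ^ e) =O[atTop] (fun n : ℕ => (n:ℝ) ^ tgt) := by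
      intro c0 e hc0 he
      rw [Asymptotics.isBigO_iff]
      refine ⟨c0, ?_⟩
      filter_upwards [eventually_ge_atTop 1] with n hn
      have h1 : (1:ℝ) ≤ n := by exact_mod_cast hn
      simp only [Real.norm_eq_abs]
      rw [abs_of_nonneg (mul_nonneg hc0 (Real.rpow_nonneg (Nat.cast_nonneg n) _)),
        abs_of_nonneg (Real.rpow_nonneg (Nat.cast_nonneg n) _)]
      exact mul_le_mul_of_nonneg_left (Real.rpow_le_rpow_of_exponent_le h1 he) hc0
    -- collapse lemmas
    have hpow : ∀ r : ℝ,
        (fun n : ℕ => (n:ℝ) * (C * (n:ℝ) ^ b) ^ r) =ᶠ[atTop]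
        (fun n : ℕ => C ^ r * (n:ℝ) ^ (1 + b * r)) := by
      intro r
      filter_upwards [eventually_ge_atTop 1] with n hn
      have h0 : (0:ℝ) < n := by exact_mod_cast hn
      rw [Real.mul_rpow hC.le (Real.rpow_nonneg h0.le _), ← Real.rpow_mul h0.le,
        Real.rpow_add h0, Real.rpow_one]
      ring
    have hpow2 : ∀ r : ℝ,
        (fun n : ℕ => (C * (n:ℝ) ^ b) ^ r) =ᶠ[atTop]
        (fun n : ℕ => C ^ r * (n:ℝ) ^ (b * r)) := by
      intro r
      filter_upwards [eventually_ge_atTop 1] with n hn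
      have h0 : (0:ℝ) < n := by exact_mod_cast hn
      rw [Real.mul_rpow hC.le (Real.rpow_nonneg h0.le _), ← Real.rpow_mul h0.le]
    -- exponent inequalities
    have kexp1 : ∀ s : ℝ, 0 ≤ s → 1 + b * ((5:ℝ) + 2 * p + s) ≤ tgt := by
      intro s hs
      rw [hb_def, htgt_def]
      have h1 : 1 + -(1:ℝ) / (3 + (p:ℝ)) * ((5:ℝ) + 2 * p + s)
          = ((3 + (p:ℝ)) - (5 + 2 * p + s)) / (3 + p) := by
        field_simp
        ring
      rw [h1, div_le_div_iff₀ hp3 hp3]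
      nlinarith [mul_nonneg hs hp3.le]
    have kexp2 : ∀ s : ℝ, 0 ≤ s → b * ((2:ℝ) + p + s) ≤ tgt := by
      intro s hs
      rw [hb_def, htgt_def]
      have h1 : -(1:ℝ) / (3 + (p:ℝ)) * ((2:ℝ) + p + s)
          = (-((2:ℝ) + p + s)) / (3 + p) := by
        field_simp
      rw [h1, div_le_div_iff₀ hp3 hp3]
      nlinarith [mul_nonneg hs hp3.le]
    -- big-O for the base terms
    have hT1 : (fun n : ℕ => ((n:ℝ) * (C * (n:ℝ) ^ b))⁻¹)
        =O[atTop] (fun n : ℕ => (n:ℝ) ^ tgt) := by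
      have heqn : (fun n : ℕ => ((n:ℝ) * (C * (n:ℝ) ^ b))⁻¹) =ᶠ[atTop]
          (fun n : ℕ => C⁻¹ * (n:ℝ) ^ tgt) := by
        filter_upwards [eventually_ge_atTop 1] with n hn
        have h0 : (0:ℝ) < n := by exact_mod_cast hn
        have h2 : (n:ℝ) * (C * (n:ℝ) ^ b) = C * (n:ℝ) ^ (1 + b) := by
          rw [Real.rpow_add h0, Real.rpow_one]; ring
        rw [h2, mul_inv, ← Real.rpow_neg h0.le]
        congr 2
        rw [hb_def, htgt_def]
        field_simp
        ring
      exact heqn.trans_isBigO (key C⁻¹ tgt (inv_nonneg.mpr hC.le) le_rfl)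
    have hT2 : (fun n : ℕ => (n:ℝ) * (C * (n:ℝ) ^ b) ^ ((5:ℝ) + 2 * p))
        =O[atTop] (fun n : ℕ => (n:ℝ) ^ tgt) := by
      refine (hpow _).trans_isBigO (key _ _ (Real.rpow_nonneg hC.le _) ?_)
      have := kexp1 0 le_rfl
      simpa using this
    have hT3 : (fun n : ℕ => (C * (n:ℝ) ^ b) ^ ((2:ℝ) + p))
        =O[atTop] (fun n : ℕ => (n:ℝ) ^ tgt) := by
      refine (hpow2 _).trans_isBigO (key _ _ (Real.rpow_nonneg hC.le _) ?_)
      have := kexp2 0 le_rfl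
      simpa using this
    have hE1 : e1 =O[atTop] (fun n : ℕ => (n:ℝ) ^ tgt) := he1.isBigO.trans hT1
    have hE2 : e2 =O[atTop] (fun n : ℕ => (n:ℝ) ^ tgt) := by
      refine he2.trans ?_
      have hA : (fun n : ℕ => (n:ℝ) * (C * (n:ℝ) ^ b) ^ ((5:ℝ) + 2 * p + 2 * a))
          =O[atTop] (fun n : ℕ => (n:ℝ) ^ tgt) :=
        (hpow _).trans_isBigO (key _ _ (Real.rpow_nonneg hC.le _)
          (kexp1 (2 * a) (by linarith)))
      have hB : (fun n : ℕ => (C * (n:ℝ) ^ b) ^ ((2:ℝ) + p + a))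
          =O[atTop] (fun n : ℕ => (n:ℝ) ^ tgt) :=
        (hpow2 _).trans_isBigO (key _ _ (Real.rpow_nonneg hC.le _)
          (kexp2 a ha.le))
      exact hA.add hB
    -- bounded multipliers
    have mulQ : ∀ (g Q : ℕ → ℝ), BddSeq Q →
        g =O[atTop] (fun n : ℕ => (n:ℝ) ^ tgt) →
        (fun n => g n * Q n) =O[atTop] (fun n : ℕ => (n:ℝ) ^ tgt) := by
      rintro g Q ⟨CQ, hCQ⟩ hg
      have hQ : Q =O[atTop] (fun _ : ℕ => (1:ℝ)) := by
        rw [Asymptotics.isBigO_iff]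
        exact ⟨CQ, Filter.Eventually.of_forall fun n => by simpa using hCQ n⟩
      simpa using hg.mul hQ
    have hfun : (fun n : ℕ =>
        coverRBCrand P M K p ν c (tauParam xl xu μp μm ν c) z ρ0
          (fun m ω => (m : ℝ) ^ (-(p : ℝ) / ((2 * p + 3) * (p + 3))) * hhatMSE m ω) n
          - (1 - α))
        = fun n : ℕ =>
          ((n:ℝ) * (C * (n:ℝ) ^ b))⁻¹ * Q1 n
          + (n:ℝ) * (C * (n:ℝ) ^ b) ^ ((5:ℝ) + 2 * p) * Q2 n
          + (C * (n:ℝ) ^ b) ^ ((2:ℝ) + p) * Q3 n + e1 n + e2 n :=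
      funext hcov
    rw [hfun]
    exact ((((mulQ _ Q1 hQ1 hT1).add (mulQ _ Q2 hQ2 hT2)).add
      (mulQ _ Q3 hQ3 hT3)).add hE1).add hE2
end
end

section
/- (Exact fixed-n conditional variance of the robust bias-corrected estimator.) Fix n, bandwidths h > 0 and b > 0 with ρ = h/b, integers 0 ≤ ν ≤ p and q = p+1, and a kernel K. Condition on X₁,…,X_n such that G₊,p, G₋,p (order-p, bandwidth h) and G₊,q, G₋,q (order-q, bandwidth b) are all invertible. If, given X₁,…,X_n, the Yᵢ are independent with conditional variance σ₊²(X_i) when X_i ≥ c and σ₋²(X_i) when X_i < c, then V[τ̂_{ν,BC}(h) | X₁,…,X_n] = (n h^{1+2ν})^{-1} V_BC, where V_BC = (h/n)(ν!)² e_ν'( G₊,p^{-1} Ω_BC,₊ Σ₊ Ω_BC,₊' G₊,p^{-1} + G₋,p^{-1} Ω_BC,₋ Σ₋ Ω_BC,₋' G₋,p^{-1} ) e_ν with Ω_BC,± = Ω_p,± − ρ^{p+1} Λ_p,± e_{p+1}' G_q,±^{-1} Ω_q,±. -/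
/-!
Shared setup for "Optimal Bandwidth Choice for Robust Bias Corrected Inference
in Regression Discontinuity Designs" (Calonico, Cattaneo, Farrell).
-/

noncomputable section

open MeasureTheory ProbabilityTheory Filter Asymptotics Matrix Topology

open MeasureTheory ProbabilityTheory Filter Asymptotics Matrix Topology RD

/-- Kernel weight matrix `Ω_p = h⁻¹[(K r_p)(X_{h,1}), …, (K r_p)(X_{h,n})]`. -/
noncomputable def OmegaMat (K : ℝ → ℝ) (p : ℕ) {n : ℕ} (c h : ℝ) (x : Fin n → ℝ) :
    Matrix (Fin (p + 1)) (Fin n) ℝ :=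
  fun j i => h⁻¹ * K ((x i - c) / h) * ((x i - c) / h) ^ (j : ℕ)

/-- RBC weight matrix `Ω_BC = Ω_p - ρ^{p+1} Λ_p e_{p+1}' G_q⁻¹ Ω_q` with `q = p+1`,
`ρ = h/b`. -/
noncomputable def OmegaBCMat (K : ℝ → ℝ) (p : ℕ) {n : ℕ} (c h b : ℝ) (x : Fin n → ℝ) :
    Matrix (Fin (p + 1)) (Fin n) ℝ :=
  OmegaMat K p c h x -
    (h / b) ^ (p + 1) • Matrix.vecMulVec (LamVec K p 1 c h x)
      (fun i => b⁻¹ * K ((x i - c) / b) *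
        (evec (p + 1) (p + 1) ⬝ᵥ
          ((Gmat K (p + 1) c b x)⁻¹ *ᵥ rvec (p + 1) ((x i - c) / b))))


section AuxRBC

open Matrix Finset

private lemma trip_comm' {a b cI : ℕ} (f : Fin a → Fin b → Fin cI → ℝ) :
    ∑ j, ∑ k, ∑ i, f j k i = ∑ i, ∑ j, ∑ k, f j k i := by
  trans ∑ j, ∑ i, ∑ k, f j k i
  · exact Finset.sum_congr rfl fun j _ => Finset.sum_comm
  · exact Finset.sum_comm

private lemma quadform_diag {m n : ℕ} (e : Fin m → ℝ) (Pm : Matrix (Fin m) (Fin n) ℝ)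
    (d : Fin n → ℝ) :
    e ⬝ᵥ ((Pm * Matrix.diagonal d * Pmᵀ) *ᵥ e) = ∑ i, d i * (∑ j, e j * Pm j i) ^ 2 := by
  simp only [dotProduct, mulVec, Matrix.mul_apply, Matrix.diagonal_apply,
    Matrix.transpose_apply, Finset.sum_mul, Finset.mul_sum, pow_two, mul_ite, ite_mul,
    mul_zero, zero_mul, Finset.sum_ite_eq, Finset.sum_ite_eq', Finset.mem_univ, if_true]
  rw [trip_comm' (f := fun j k i => e j * (Pm j i * d i * Pm k i * e k))]
  refine Finset.sum_congr rfl fun i _ => ?_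
  refine Finset.sum_congr rfl fun j _ => ?_
  exact Finset.sum_congr rfl fun k _ => by ring

private lemma dot_mulVec_lin {m n : ℕ} (e : Fin m → ℝ) (M : Matrix (Fin m) (Fin m) ℝ)
    (cst : ℝ) (s : Fin n → ℝ) (v : Fin n → Fin m → ℝ) :
    e ⬝ᵥ (M *ᵥ (cst • ∑ i, s i • v i)) = ∑ i, cst * s i * (e ⬝ᵥ (M *ᵥ v i)) := by
  simp only [dotProduct, mulVec, Pi.smul_apply, Finset.sum_apply, smul_eq_mul,
    Finset.mul_sum]
  rw [trip_comm' (f := fun j k i => e j * (M j k * (cst * (s i * v i k))))]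
  refine Finset.sum_congr rfl fun i _ => ?_
  refine Finset.sum_congr rfl fun j _ => ?_
  exact Finset.sum_congr rfl fun k _ => by ring

private lemma dot_mulVec_col {m : ℕ} (e : Fin m → ℝ) (M : Matrix (Fin m) (Fin m) ℝ)
    (a s t : ℝ) (r Λ : Fin m → ℝ) :
    e ⬝ᵥ (M *ᵥ fun j => a * r j - s * (Λ j * t))
      = a * (e ⬝ᵥ (M *ᵥ r)) - s * t * (e ⬝ᵥ (M *ᵥ Λ)) := by
  simp only [dotProduct, mulVec, Finset.mul_sum, mul_sub, Finset.sum_sub_distrib]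
  congr 1
  · refine Finset.sum_congr rfl fun j _ => Finset.sum_congr rfl fun k _ => by ring
  · refine Finset.sum_congr rfl fun j _ => Finset.sum_congr rfl fun k _ => by ring

private lemma Gmat_symm (K : ℝ → ℝ) (p : ℕ) {n : ℕ} (c h : ℝ) (x : Fin n → ℝ) :
    (Gmat K p c h x)ᵀ = Gmat K p c h x := by
  ext a b
  simp only [Gmat, Matrix.transpose_apply, Matrix.smul_apply, Matrix.sum_apply,
    Matrix.vecMulVec_apply, rvec, smul_eq_mul]
  congr 1
  exact Finset.sum_congr rfl fun i _ => by ring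

/-- Linear-in-`y` representation of one side of the RBC estimator. -/
private lemma oneSide (K : ℝ → ℝ) (p ν : ℕ) {n : ℕ} (c h b : ℝ)
    (hh : h ≠ 0) (hb : b ≠ 0) (x y : Fin n → ℝ) :
    muHat K p ν c h x y - h ^ ((p : ℤ) + 1 - ν) *
        (((ν.factorial : ℝ) / ((p + 1).factorial : ℝ)) *
          ((evec p ν ⬝ᵥ ((Gmat K p c h x)⁻¹ *ᵥ LamVec K p 1 c h x)) *
            muDerivHatTop K p c b x y))
      = ∑ i, ((ν.factorial : ℝ) * h ^ (-(ν : ℤ)) * (n : ℝ)⁻¹ *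
          (evec p ν ⬝ᵥ ((Gmat K p c h x)⁻¹ *ᵥ fun j => OmegaBCMat K p c h b x j i)))
            * y i := by
  have h1 : evec p ν ⬝ᵥ thetaHat K p c h x y
      = ∑ i, (((n : ℝ) * h)⁻¹ * (K ((x i - c) / h) * y i)) *
          (evec p ν ⬝ᵥ ((Gmat K p c h x)⁻¹ *ᵥ rvec p ((x i - c) / h))) := by
    rw [thetaHat, SvecLP]; exact dot_mulVec_lin _ _ _ _ _
  have h2 : evec (p + 1) (p + 1) ⬝ᵥ thetaHat K (p + 1) c b x y
      = ∑ i, (((n : ℝ) * b)⁻¹ * (K ((x i - c) / b) * y i)) *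
          (evec (p + 1) (p + 1) ⬝ᵥ ((Gmat K (p + 1) c b x)⁻¹ *ᵥ
            rvec (p + 1) ((x i - c) / b))) := by
    rw [thetaHat, SvecLP]; exact dot_mulVec_lin _ _ _ _ _
  have h3 : ∀ i : Fin n,
      (evec p ν ⬝ᵥ ((Gmat K p c h x)⁻¹ *ᵥ fun j => OmegaBCMat K p c h b x j i))
      = (h⁻¹ * K ((x i - c) / h)) *
          (evec p ν ⬝ᵥ ((Gmat K p c h x)⁻¹ *ᵥ rvec p ((x i - c) / h)))
        - (h / b) ^ (p + 1) *
            (b⁻¹ * K ((x i - c) / b) *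
              (evec (p + 1) (p + 1) ⬝ᵥ ((Gmat K (p + 1) c b x)⁻¹ *ᵥ
                rvec (p + 1) ((x i - c) / b)))) *
            (evec p ν ⬝ᵥ ((Gmat K p c h x)⁻¹ *ᵥ LamVec K p 1 c h x)) := by
    intro i
    have hcol : (fun j => OmegaBCMat K p c h b x j i)
        = fun j => (h⁻¹ * K ((x i - c) / h)) * rvec p ((x i - c) / h) j
          - (h / b) ^ (p + 1) * (LamVec K p 1 c h x j *
              (b⁻¹ * K ((x i - c) / b) *
                (evec (p + 1) (p + 1) ⬝ᵥ ((Gmat K (p + 1) c b x)⁻¹ *ᵥ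
                  rvec (p + 1) ((x i - c) / b))))) := by
      funext j
      simp only [OmegaBCMat, OmegaMat, Matrix.sub_apply, Matrix.smul_apply,
        Matrix.vecMulVec_apply, smul_eq_mul, rvec]
    rw [hcol, dot_mulVec_col]
  rw [muHat, muDerivHatTop, h1, h2]
  simp only [Finset.mul_sum]
  rw [← Finset.sum_sub_distrib]
  refine Finset.sum_congr rfl fun i _ => ?_
  rw [h3 i]
  have e1 : h ^ (-(ν : ℤ)) = (h ^ ν)⁻¹ := by rw [_root_.zpow_neg, zpow_natCast]
  have e2 : h ^ ((p : ℤ) + 1 - ν) = h ^ (p + 1) * (h ^ ν)⁻¹ := by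
    rw [show (p : ℤ) + 1 - ν = ((p + 1 : ℕ) : ℤ) + (-(ν : ℤ)) by push_cast; ring,
      zpow_add₀ hh, zpow_natCast, _root_.zpow_neg, zpow_natCast]
  have e3 : b ^ (-((p : ℤ) + 1)) = (b ^ (p + 1))⁻¹ := by
    rw [show -((p : ℤ) + 1) = -(((p + 1 : ℕ) : ℤ)) by push_cast; ring, _root_.zpow_neg, zpow_natCast]
  rw [e1, e2, e3]
  have hfac : ((p + 1).factorial : ℝ) ≠ 0 := Nat.cast_ne_zero.2 (p + 1).factorial_ne_zero
  have hhp : h ^ ν ≠ 0 := pow_ne_zero _ hh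
  have hhp1 : h ^ (p + 1) ≠ 0 := pow_ne_zero _ hh
  have hbp1 : b ^ (p + 1) ≠ 0 := pow_ne_zero _ hb
  generalize evec p ν ⬝ᵥ ((Gmat K p c h x)⁻¹ *ᵥ rvec p ((x i - c) / h)) = A
  generalize evec p ν ⬝ᵥ ((Gmat K p c h x)⁻¹ *ᵥ LamVec K p 1 c h x) = L
  generalize evec (p + 1) (p + 1) ⬝ᵥ
      ((Gmat K (p + 1) c b x)⁻¹ *ᵥ rvec (p + 1) ((x i - c) / b)) = Bq
  generalize K ((x i - c) / h) = KH
  generalize K ((x i - c) / b) = KB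
  generalize y i = yi
  simp only [mul_inv]
  generalize ((n : ℝ))⁻¹ = N
  field_simp [hh, hb, hfac, hhp, hhp1, hbp1]
  have hbinv : b * b ^ p * b⁻¹ * b⁻¹ ^ p = 1 := by rw [inv_pow]; field_simp
  linear_combination (N * yi * h ^ 2 * h ^ p * L * KB * Bq) * hbinv

private lemma Kp_vanish (K : ℝ → ℝ) {u : ℝ} (hu : u < 0) : Kp K u = 0 := by
  simp [Kp, not_le.2 hu]

private lemma Km_vanish (K : ℝ → ℝ) {u : ℝ} (hu : 0 ≤ u) : Km K u = 0 := by
  simp [Km, not_lt.2 hu]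

private lemma colKm_zero (K : ℝ → ℝ) (p : ℕ) {n : ℕ} (c h b : ℝ) (hh : 0 < h) (hb : 0 < b)
    (x : Fin n → ℝ) (i : Fin n) (hi : c ≤ x i) :
    (fun j => OmegaBCMat (Km K) p c h b x j i) = 0 := by
  funext j
  have h1 : Km K ((x i - c) / h) = 0 :=
    Km_vanish K (div_nonneg (sub_nonneg.2 hi) hh.le)
  have h2 : Km K ((x i - c) / b) = 0 :=
    Km_vanish K (div_nonneg (sub_nonneg.2 hi) hb.le)
  simp [OmegaBCMat, OmegaMat, Matrix.vecMulVec_apply, h1, h2]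

private lemma colKp_zero (K : ℝ → ℝ) (p : ℕ) {n : ℕ} (c h b : ℝ) (hh : 0 < h) (hb : 0 < b)
    (x : Fin n → ℝ) (i : Fin n) (hi : x i < c) :
    (fun j => OmegaBCMat (Kp K) p c h b x j i) = 0 := by
  funext j
  have h1 : Kp K ((x i - c) / h) = 0 :=
    Kp_vanish K (div_neg_of_neg_of_pos (sub_neg.2 hi) hh)
  have h2 : Kp K ((x i - c) / b) = 0 :=
    Kp_vanish K (div_neg_of_neg_of_pos (sub_neg.2 hi) hb)
  simp [OmegaBCMat, OmegaMat, Matrix.vecMulVec_apply, h1, h2]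

end AuxRBC

/-- Exact fixed-n conditional variance of the robust bias-corrected
estimator: conditionally on the design `x`, with independent outcomes having variances
`σ₊²(xᵢ)`/`σ₋²(xᵢ)` on each side of the cutoff,
`V[τ̂_{ν,BC}(h)] = (n h^{1+2ν})⁻¹ V_BC` with the RBC sandwich formula for `V_BC`. -/
theorem exact_conditional_variance_RBC
    {Ω : Type} [MeasurableSpace Ω] (P : Measure Ω) [IsProbabilityMeasure P]
    (n p ν : ℕ) (hν : ν ≤ p) (c h b : ℝ) (hh : 0 < h) (hb : 0 < b) (K : ℝ → ℝ)
    (x : Fin n → ℝ) (Y : Fin n → Ω → ℝ)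
    (hmeas : ∀ i, Measurable (Y i)) (hL2 : ∀ i, MemLp (Y i) 2 P)
    (hGpp : IsUnit (Gmat (Kp K) p c h x).det)
    (hGpm : IsUnit (Gmat (Km K) p c h x).det)
    (hGqp : IsUnit (Gmat (Kp K) (p + 1) c b x).det)
    (hGqm : IsUnit (Gmat (Km K) (p + 1) c b x).det)
    (hindep : iIndepFun Y P)
    (σ2p σ2m : ℝ → ℝ)
    (hvar : ∀ i, variance (Y i) P = if c ≤ x i then σ2p (x i) else σ2m (x i)) :
    variance (fun ω => tauHatBC K p ν c h b x (fun i => Y i ω)) P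
      = ((n : ℝ) * h ^ (1 + 2 * ν))⁻¹ *
        ((h / (n : ℝ)) * (ν.factorial : ℝ) ^ 2 *
          (evec p ν ⬝ᵥ
            (((Gmat (Kp K) p c h x)⁻¹ * OmegaBCMat (Kp K) p c h b x
                * Matrix.diagonal (fun i => σ2p (x i))
                * (OmegaBCMat (Kp K) p c h b x)ᵀ * (Gmat (Kp K) p c h x)⁻¹
              + (Gmat (Km K) p c h x)⁻¹ * OmegaBCMat (Km K) p c h b x
                * Matrix.diagonal (fun i => σ2m (x i))
                * (OmegaBCMat (Km K) p c h b x)ᵀ * (Gmat (Km K) p c h x)⁻¹)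
              *ᵥ evec p ν))) := by
  classical
  have hh0 : h ≠ 0 := hh.ne'
  have hb0 : b ≠ 0 := hb.ne'
  have hn : (n : ℝ) ≠ 0 := by
    rcases Nat.eq_zero_or_pos n with h0 | h0
    · exfalso
      have hG0 : Gmat (Kp K) p c h x = 0 := by
        subst h0
        simp [Gmat]
      rw [hG0, Matrix.det_zero] at hGpp
      simp at hGpp
    · exact Nat.cast_ne_zero.2 h0.ne'
  -- linear representation of the RBC estimator
  have hrep : ∀ y : Fin n → ℝ, tauHatBC K p ν c h b x y
      = ∑ i, ((ν.factorial : ℝ) * h ^ (-(ν : ℤ)) * (n : ℝ)⁻¹ *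
          ((evec p ν ⬝ᵥ ((Gmat (Kp K) p c h x)⁻¹ *ᵥ
              fun j => OmegaBCMat (Kp K) p c h b x j i))
            - (evec p ν ⬝ᵥ ((Gmat (Km K) p c h x)⁻¹ *ᵥ
              fun j => OmegaBCMat (Km K) p c h b x j i)))) * y i := by
    intro y
    have hp' := oneSide (Kp K) p ν c h b hh0 hb0 x y
    have hm' := oneSide (Km K) p ν c h b hh0 hb0 x y
    have key : tauHatBC K p ν c h b x y
        = (∑ i, ((ν.factorial : ℝ) * h ^ (-(ν : ℤ)) * (n : ℝ)⁻¹ *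
            (evec p ν ⬝ᵥ ((Gmat (Kp K) p c h x)⁻¹ *ᵥ
              fun j => OmegaBCMat (Kp K) p c h b x j i))) * y i)
          - ∑ i, ((ν.factorial : ℝ) * h ^ (-(ν : ℤ)) * (n : ℝ)⁻¹ *
            (evec p ν ⬝ᵥ ((Gmat (Km K) p c h x)⁻¹ *ᵥ
              fun j => OmegaBCMat (Km K) p c h b x j i))) * y i := by
      rw [tauHatBC, tauHat, Bhat, ← hp', ← hm']
      ring
    rw [key, ← Finset.sum_sub_distrib]
    exact Finset.sum_congr rfl fun i _ => by ring
  -- variance of the linear combination of independent variables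
  have hfun : (fun ω => tauHatBC K p ν c h b x fun i => Y i ω)
      = ∑ i, fun ω => ((ν.factorial : ℝ) * h ^ (-(ν : ℤ)) * (n : ℝ)⁻¹ *
          ((evec p ν ⬝ᵥ ((Gmat (Kp K) p c h x)⁻¹ *ᵥ
              fun j => OmegaBCMat (Kp K) p c h b x j i))
            - (evec p ν ⬝ᵥ ((Gmat (Km K) p c h x)⁻¹ *ᵥ
              fun j => OmegaBCMat (Km K) p c h b x j i)))) * Y i ω := by
    funext ω
    rw [hrep fun i => Y i ω]
    simp [Finset.sum_apply]
  rw [hfun]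
  rw [ProbabilityTheory.IndepFun.variance_sum
      (fun i _ => (hL2 i).const_mul _)
      (fun i _ j _ hij => by
        have hIF := hindep.indepFun hij
        exact hIF.comp (measurable_const_mul _) (measurable_const_mul _))]
  have hvar' : ∀ i : Fin n,
      variance (fun ω => ((ν.factorial : ℝ) * h ^ (-(ν : ℤ)) * (n : ℝ)⁻¹ *
          ((evec p ν ⬝ᵥ ((Gmat (Kp K) p c h x)⁻¹ *ᵥ
              fun j => OmegaBCMat (Kp K) p c h b x j i))
            - (evec p ν ⬝ᵥ ((Gmat (Km K) p c h x)⁻¹ *ᵥ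
              fun j => OmegaBCMat (Km K) p c h b x j i)))) * Y i ω) P
        = ((ν.factorial : ℝ) * h ^ (-(ν : ℤ)) * (n : ℝ)⁻¹ *
          ((evec p ν ⬝ᵥ ((Gmat (Kp K) p c h x)⁻¹ *ᵥ
              fun j => OmegaBCMat (Kp K) p c h b x j i))
            - (evec p ν ⬝ᵥ ((Gmat (Km K) p c h x)⁻¹ *ᵥ
              fun j => OmegaBCMat (Km K) p c h b x j i)))) ^ 2 *
          (if c ≤ x i then σ2p (x i) else σ2m (x i)) := by
    intro i
    rw [variance_const_mul, hvar i]
  simp only [hvar']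
  -- rewrite the RHS via the diagonal quadratic form
  have hsymp : ((Gmat (Kp K) p c h x)⁻¹)ᵀ = (Gmat (Kp K) p c h x)⁻¹ := by
    rw [Matrix.transpose_nonsing_inv, Gmat_symm]
  have hsymm : ((Gmat (Km K) p c h x)⁻¹)ᵀ = (Gmat (Km K) p c h x)⁻¹ := by
    rw [Matrix.transpose_nonsing_inv, Gmat_symm]
  have hquad : ∀ (G : Matrix (Fin (p + 1)) (Fin (p + 1)) ℝ),
      Gᵀ = G → ∀ (Om : Matrix (Fin (p + 1)) (Fin n) ℝ) (d : Fin n → ℝ),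
      evec p ν ⬝ᵥ ((G * Om * Matrix.diagonal d * Omᵀ * G) *ᵥ evec p ν)
        = ∑ i, d i * (evec p ν ⬝ᵥ (G *ᵥ fun j => Om j i)) ^ 2 := by
    intro G hG Om d
    have hmat : G * Om * Matrix.diagonal d * Omᵀ * G
        = (G * Om) * Matrix.diagonal d * (G * Om)ᵀ := by
      rw [Matrix.transpose_mul, hG, Matrix.mul_assoc (G * Om * Matrix.diagonal d)]
    rw [hmat, quadform_diag]
    refine Finset.sum_congr rfl fun i _ => ?_
    simp only [dotProduct, Matrix.mul_apply, mulVec]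
  rw [Matrix.add_mulVec, dotProduct_add,
    hquad _ hsymp (OmegaBCMat (Kp K) p c h b x) (fun i => σ2p (x i)),
    hquad _ hsymm (OmegaBCMat (Km K) p c h b x) (fun i => σ2m (x i))]
  have hC : ((n : ℝ) * h ^ (1 + 2 * ν))⁻¹ * ((h / (n : ℝ)) * (ν.factorial : ℝ) ^ 2)
      = ((ν.factorial : ℝ) * h ^ (-(ν : ℤ)) * (n : ℝ)⁻¹) ^ 2 := by
    rw [_root_.zpow_neg, zpow_natCast]
    have hhp : h ^ ν ≠ 0 := pow_ne_zero _ hh0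
    have hhp2 : h ^ (1 + 2 * ν) ≠ 0 := pow_ne_zero _ hh0
    field_simp
    ring
  rw [← mul_assoc, hC, ← Finset.sum_add_distrib, Finset.mul_sum]
  refine Finset.sum_congr rfl fun i _ => ?_
  by_cases hci : c ≤ x i
  · rw [colKm_zero K p c h b hh hb x i hci]
    rw [if_pos hci]
    simp only [Matrix.mulVec_zero, dotProduct_zero]
    ring
  · rw [colKp_zero K p c h b hh hb x i (not_le.1 hci)]
    rw [if_neg hci]
    simp only [Matrix.mulVec_zero, dotProduct_zero]
    ring
end
end

section
/- (Equivalent kernel identity: ρ = 1 bias correction with the uniform kernel yields the order-(p+1) optimal equivalent kernel.) Fix an integer p ≥ 0 and set q = p+1. Let Ḡ_p ∈ ℝ^{(p+1)×(p+1)} have entries (Ḡ_p)_{ij} = ∫₀¹ u^{i+j} du = 1/(i+j+1) for 0 ≤ i,j ≤ p, let Ḡ_q ∈ ℝ^{(q+1)×(q+1)} be defined analogously, and let L̄_p ∈ ℝ^{p+1} have entries (L̄_p)_i = ∫₀¹ u^{i+p+1} du = 1/(i+p+2) for 0 ≤ i ≤ p. Then Ḡ_p and Ḡ_q are invertible, and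 for every x ∈ ℝ: e₀' Ḡ_p^{-1} [ r_p(x) − L̄_p · e_{p+1}' Ḡ_q^{-1} r_q(x) ] = e₀' Ḡ_q^{-1} r_q(x). That is, the bias-corrected equivalent kernel with uniform kernel and ρ = 1 coincides pointwise on [0,1] with the variance-minimizing optimal equivalent kernel of the order-(p+1) boundary local polynomial fit. -/
noncomputable section

open Matrix

namespace RD19

/-- Power vector `r_k(u) = (1, u, …, u^k)`. -/
def rvec (k : ℕ) (u : ℝ) : Fin (k + 1) → ℝ := fun j => u ^ (j : ℕ)

/-- Coordinate unit vector `e_j` of `ℝ^{k+1}`. -/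
def evec (k j : ℕ) : Fin (k + 1) → ℝ := fun i => if (i : ℕ) = j then 1 else 0

/-- `Ḡ_k = ∫₀¹ r_k(u) r_k(u)' du`, i.e. `(Ḡ_k)ᵢⱼ = 1/(i+j+1)`. -/
def Gbar (k : ℕ) : Matrix (Fin (k + 1)) (Fin (k + 1)) ℝ :=
  fun i j => 1 / ((i : ℕ) + (j : ℕ) + 1 : ℝ)

/-- `L̄_p = ∫₀¹ r_p(u) u^{p+1} du`, i.e. `(L̄_p)ᵢ = 1/(i+p+2)`. -/
def Lbar (p : ℕ) : Fin (p + 1) → ℝ := fun i => 1 / ((i : ℕ) + (p : ℕ) + 2 : ℝ)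

open MeasureTheory intervalIntegral Polynomial
open scoped NNReal ENNReal

/-- The Hilbert quadratic form is an integral of a squared polynomial. -/
lemma quad_eq_integral (k : ℕ) (x : Fin (k+1) → ℝ) :
    x ⬝ᵥ (Gbar k *ᵥ x)
      = ∫ u in (0:ℝ)..1, (∑ j : Fin (k+1), x j * u ^ (j:ℕ))^2 := by
  have h1 : ∀ u : ℝ, (∑ j : Fin (k+1), x j * u ^ (j:ℕ))^2
      = ∑ i : Fin (k+1), ∑ j : Fin (k+1), x i * x j * u ^ ((i:ℕ)+(j:ℕ)) := by
    intro u
    rw [sq, Finset.sum_mul_sum]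
    exact Finset.sum_congr rfl fun i _ => Finset.sum_congr rfl fun j _ => by ring
  have hint : ∀ i j : Fin (k+1),
      IntervalIntegrable (fun u : ℝ => x i * x j * u ^ ((i:ℕ)+(j:ℕ))) volume 0 1 :=
    fun i j => (continuous_const.mul (continuous_pow _)).intervalIntegrable 0 1
  have hint2 : ∀ i : Fin (k+1),
      IntervalIntegrable (fun u : ℝ => ∑ j : Fin (k+1), x i * x j * u ^ ((i:ℕ)+(j:ℕ)))
        volume 0 1 :=
    fun i => by simpa [Finset.sum_fn] using IntervalIntegrable.sum (f := fun (j : Fin (k+1)) (u : ℝ) => x i * x j * u ^ ((i:ℕ)+(j:ℕ))) Finset.univ (fun j _ => hint i j)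
  rw [intervalIntegral.integral_congr (g := fun u =>
      ∑ i : Fin (k+1), ∑ j : Fin (k+1), x i * x j * u ^ ((i:ℕ)+(j:ℕ)))
      (fun u _ => h1 u)]
  rw [intervalIntegral.integral_finset_sum
      (f := fun (i : Fin (k+1)) (u : ℝ) => ∑ j : Fin (k+1), x i * x j * u ^ ((i:ℕ)+(j:ℕ)))
      (fun i _ => hint2 i)]
  rw [dotProduct]
  refine Finset.sum_congr rfl fun i _ => ?_
  rw [intervalIntegral.integral_finset_sum
      (f := fun (j : Fin (k+1)) (u : ℝ) => x i * x j * u ^ ((i:ℕ)+(j:ℕ)))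
      (fun j _ => hint i j)]
  simp_rw [intervalIntegral.integral_const_mul, integral_pow]
  simp only [Gbar, mulVec, dotProduct]
  rw [Finset.mul_sum]
  refine Finset.sum_congr rfl fun j _ => ?_
  push_cast
  ring

/-- The squared polynomial has positive integral when the coefficients are nonzero. -/
lemma integral_sq_pos (k : ℕ) (x : Fin (k+1) → ℝ) (hx : x ≠ 0) :
    0 < ∫ u in (0:ℝ)..1, (∑ j : Fin (k+1), x j * u ^ (j:ℕ))^2 := by
  set P : Polynomial ℝ := ∑ j : Fin (k+1), Polynomial.C (x j) * Polynomial.X ^ (j:ℕ) with hP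
  have heval : ∀ u : ℝ, P.eval u = ∑ j : Fin (k+1), x j * u ^ (j:ℕ) := by
    intro u; simp [hP, Polynomial.eval_finset_sum]
  have hPne : P ≠ 0 := by
    obtain ⟨m, hm⟩ : ∃ m, x m ≠ 0 := by
      by_contra h; push_neg at h; exact hx (funext fun i => h i)
    intro h0
    apply hm
    have : P.coeff (m:ℕ) = x m := by
      rw [hP, Polynomial.finset_sum_coeff]
      rw [Finset.sum_eq_single m]
      · simp
      · intro j _ hj
        simp only [Polynomial.coeff_C_mul, Polynomial.coeff_X_pow]
        rw [if_neg (fun h => hj (Fin.val_injective h.symm))]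
        ring
      · simp
    rw [h0] at this; simp at this; exact this.symm
  have hroots : {u : ℝ | P.IsRoot u}.Finite := Polynomial.finite_setOf_isRoot hPne
  set f : ℝ → ℝ := fun u => (∑ j : Fin (k+1), x j * u ^ (j:ℕ))^2 with hf
  have hfc : Continuous f := by
    apply Continuous.pow
    exact continuous_finset_sum _ fun j _ => continuous_const.mul (continuous_pow _)
  have hnn : 0 ≤ f := fun u => sq_nonneg _
  rw [intervalIntegral.integral_of_le zero_le_one]
  rw [MeasureTheory.integral_pos_iff_support_of_nonneg hnn
    (hfc.integrableOn_Ioc (μ := volume))]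
  have hsub : Set.Ioc (0:ℝ) 1 \ {u : ℝ | P.IsRoot u} ⊆ Function.support f := by
    intro u hu
    have : P.eval u ≠ 0 := hu.2
    rw [heval] at this
    simp only [Function.mem_support, hf]
    exact pow_ne_zero _ this
  rw [Measure.restrict_apply' measurableSet_Ioc]
  calc (0:ℝ≥0∞) < volume (Set.Ioc (0:ℝ) 1 \ {u : ℝ | P.IsRoot u}) := by
        rw [MeasureTheory.measure_diff_null (hroots.measure_zero _)]
        simp
    _ ≤ volume (Function.support f ∩ Set.Ioc 0 1) := by
        apply measure_mono
        intro u hu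
        exact ⟨hsub hu, hu.1⟩

/-- The Hilbert matrix is positive definite. -/
lemma gbar_posDef (k : ℕ) : (Gbar k).PosDef := by
  rw [Matrix.posDef_iff_dotProduct_mulVec]
  constructor
  · ext i j
    simp [Gbar, Matrix.conjTranspose]
    ring_nf
  · intro x hx
    have : (star x) = x := by simp
    rw [this, quad_eq_integral]
    exact integral_sq_pos k x hx

lemma gbar_isUnit_det (k : ℕ) : IsUnit (Gbar k).det :=
  (gbar_posDef k).det_pos.ne'.isUnit

lemma evec_dot {k j : ℕ} (hj : j < k + 1) (v : Fin (k+1) → ℝ) :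
    evec k j ⬝ᵥ v = v ⟨j, hj⟩ := by
  rw [dotProduct]
  rw [Finset.sum_eq_single (⟨j, hj⟩ : Fin (k+1))]
  · simp [evec]
  · intro i _ hi
    have : (i : ℕ) ≠ j := fun h => hi (Fin.ext h)
    simp [evec, this]
  · simp

/-- Equivalent kernel identity: with the uniform kernel and `ρ = 1`,
the bias-corrected order-`p` equivalent kernel coincides pointwise with the
variance-minimizing optimal equivalent kernel of the order-`(p+1)` boundary local
polynomial fit:
`e₀'Ḡ_p⁻¹[r_p(x) - L̄_p e_{p+1}'Ḡ_q⁻¹ r_q(x)] = e₀'Ḡ_q⁻¹ r_q(x)` for all `x`,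
where `q = p+1`; moreover `Ḡ_p` and `Ḡ_q` are invertible. -/
theorem equivalent_kernel_identity (p : ℕ) :
    IsUnit (Gbar p).det ∧ IsUnit (Gbar (p + 1)).det ∧
    ∀ x : ℝ,
      evec p 0 ⬝ᵥ ((Gbar p)⁻¹ *ᵥ fun j : Fin (p + 1) =>
          rvec p x j - Lbar p j *
            (evec (p + 1) (p + 1) ⬝ᵥ ((Gbar (p + 1))⁻¹ *ᵥ rvec (p + 1) x)))
        = evec (p + 1) 0 ⬝ᵥ ((Gbar (p + 1))⁻¹ *ᵥ rvec (p + 1) x) := by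
  have hdp := gbar_isUnit_det p
  have hdq := gbar_isUnit_det (p + 1)
  refine ⟨hdp, hdq, fun x => ?_⟩
  set w : Fin (p + 2) → ℝ := (Gbar (p + 1))⁻¹ *ᵥ rvec (p + 1) x with hw
  have hBw : Gbar (p + 1) *ᵥ w = rvec (p + 1) x := by
    rw [hw, Matrix.mulVec_mulVec, Matrix.mul_nonsing_inv _ hdq, Matrix.one_mulVec]
  set w1 : Fin (p + 1) → ℝ := fun j => w j.castSucc with hw1
  have hscalar : evec (p + 1) (p + 1) ⬝ᵥ w = w (Fin.last (p + 1)) := by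
    rw [evec_dot (Nat.lt_succ_self _) w]; rfl
  have hA : Gbar p *ᵥ w1 = fun j : Fin (p + 1) =>
      rvec p x j - Lbar p j * (w (Fin.last (p + 1))) := by
    funext i
    have hrow := congrFun hBw i.castSucc
    rw [Matrix.mulVec, dotProduct, Fin.sum_univ_castSucc] at hrow
    have hG : ∀ j : Fin (p+1), Gbar (p+1) i.castSucc j.castSucc = Gbar p i j := by
      intro j; simp [Gbar]
    have hL : Gbar (p+1) i.castSucc (Fin.last (p+1)) = Lbar p i := by
      simp [Gbar, Lbar, Fin.val_last]
      ring_nf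
    have hrv : rvec (p+1) x i.castSucc = rvec p x i := by simp [rvec]
    rw [Matrix.mulVec, dotProduct]
    have : ∑ j : Fin (p+1), Gbar p i j * w1 j
        = ∑ j : Fin (p+1), Gbar (p+1) i.castSucc j.castSucc * w j.castSucc := by
      exact Finset.sum_congr rfl fun j _ => by rw [hG j]
    rw [this]
    rw [hL, hrv] at hrow
    linarith [hrow]
  have hw1eq : ((Gbar p)⁻¹ *ᵥ fun j : Fin (p + 1) =>
      rvec p x j - Lbar p j * (evec (p + 1) (p + 1) ⬝ᵥ w)) = w1 := by
    rw [hscalar, ← hA, Matrix.mulVec_mulVec, Matrix.nonsing_inv_mul _ hdp,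
      Matrix.one_mulVec]
  rw [hw1eq]
  rw [evec_dot (Nat.succ_pos p) w1, evec_dot (Nat.succ_pos (p+1)) w]
  show w (Fin.castSucc ⟨0, _⟩) = w ⟨0, _⟩
  congr 1

end RD19
end
end
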